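/- arXiv:1912.02642 — 5 statements merged into one kernel-verified Lean document; each statement's English description precedes it below -/
import Mathlib

section
/- Let A be a complex unital Banach algebra, a, b ∈ A quasinilpotent, and λ a nonzero complex number. If ab = λba, then a + b is quasinilpotent. -/
open Filter

open Finset in
private lemma qnp_growth_bound {𝔸 : Type*} [NormedRing 𝔸] (x : 𝔸)
    (h : Tendsto (fun n : ℕ => ‖x ^ n‖ ^ (1 / (n : ℝ))) atTop (nhds 0))
    {ε : ℝ} (hε : 0 < ε) : ∃ C : ℝ, 1 ≤ C ∧ ∀ n, ‖x ^ n‖ ≤ C * ε ^ n := by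
  obtain ⟨N, hN⟩ := eventually_atTop.mp (h.eventually (gt_mem_nhds hε))
  refine ⟨1 + ∑ i ∈ range (N + 1), ‖x ^ i‖ / ε ^ i,
    le_add_of_nonneg_right (Finset.sum_nonneg fun i _ => by positivity), fun n => ?_⟩
  rcases le_or_gt n N with hn | hn
  · have h1 : ‖x ^ n‖ / ε ^ n ≤ ∑ i ∈ range (N + 1), ‖x ^ i‖ / ε ^ i :=
      Finset.single_le_sum (f := fun i => ‖x ^ i‖ / ε ^ i) (fun i _ => by positivity)
        (Finset.mem_range.mpr (Nat.lt_succ_of_le hn))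
    have h2 : ‖x ^ n‖ = (‖x ^ n‖ / ε ^ n) * ε ^ n := by
      field_simp
    rw [h2]
    have hεn : (0:ℝ) ≤ ε ^ n := by positivity
    nlinarith [h1, hεn]
  · have hn1 : 1 ≤ n := by omega
    have hne : (n : ℝ) ≠ 0 := Nat.cast_ne_zero.mpr (by omega)
    have hkey : ‖x ^ n‖ ≤ ε ^ n := by
      have h3 : ‖x ^ n‖ = (‖x ^ n‖ ^ (1 / (n : ℝ))) ^ n := by
        rw [← Real.rpow_natCast (‖x ^ n‖ ^ (1 / (n : ℝ))) n,
          ← Real.rpow_mul (norm_nonneg _), one_div, inv_mul_cancel₀ hne, Real.rpow_one]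
      rw [h3]
      exact pow_le_pow_left₀ (Real.rpow_nonneg (norm_nonneg _) _) (hN n (by omega)).le n
    have hsum : (0:ℝ) ≤ ∑ i ∈ range (N + 1), ‖x ^ i‖ / ε ^ i :=
      Finset.sum_nonneg fun i _ => by positivity
    nlinarith [pow_nonneg hε.le n]

private lemma qnp_tendsto_of_bounds {𝔸 : Type*} [NormedRing 𝔸] (y : 𝔸)
    (h : ∀ ε : ℝ, 0 < ε → ∃ C : ℝ, 1 ≤ C ∧ ∀ n, ‖y ^ n‖ ≤ C * ε ^ n) :
    Tendsto (fun n : ℕ => ‖y ^ n‖ ^ (1 / (n : ℝ))) atTop (nhds 0) := by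
  rw [Metric.tendsto_atTop]
  intro δ hδ
  obtain ⟨C, hC1, hC⟩ := h (δ / 4) (by positivity)
  have hC0 : (0:ℝ) < C := zero_lt_one.trans_le hC1
  have hlim : Tendsto (fun n : ℕ => C ^ ((1:ℝ) / (n : ℝ)) * (δ / 4)) atTop (nhds (δ / 4)) := by
    have h1 : Tendsto (fun n : ℕ => C ^ ((1:ℝ) / (n : ℝ))) atTop (nhds 1) := by
      have := (Real.continuousAt_const_rpow (a := C) (b := 0) hC0.ne').tendsto.comp
        tendsto_one_div_atTop_nhds_zero_nat
      simpa [Function.comp_def, Real.rpow_zero] using this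
    simpa using h1.mul_const (δ / 4)
  obtain ⟨N, hN⟩ := eventually_atTop.mp (hlim.eventually (gt_mem_nhds (by linarith : δ / 4 < δ / 2)))
  refine ⟨max N 1, fun n hn => ?_⟩
  have hn1 : 1 ≤ n := le_trans (le_max_right N 1) hn
  have hne : (n : ℝ) ≠ 0 := Nat.cast_ne_zero.mpr (by omega)
  have key : ‖y ^ n‖ ^ (1 / (n : ℝ)) ≤ C ^ ((1:ℝ) / (n : ℝ)) * (δ / 4) := by
    have h1 : ‖y ^ n‖ ^ (1 / (n : ℝ)) ≤ (C * (δ / 4) ^ n) ^ (1 / (n : ℝ)) :=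
      Real.rpow_le_rpow (norm_nonneg _) (hC n) (by positivity)
    have h2 : (C * (δ / 4) ^ n) ^ (1 / (n : ℝ)) = C ^ ((1:ℝ) / (n : ℝ)) * (δ / 4) := by
      rw [Real.mul_rpow hC0.le (by positivity), ← Real.rpow_natCast (δ / 4) n,
        ← Real.rpow_mul (by positivity), mul_one_div, div_self hne, Real.rpow_one]
    linarith
  have hpos : 0 ≤ ‖y ^ n‖ ^ (1 / (n : ℝ)) := Real.rpow_nonneg (norm_nonneg _) _
  have hlt := hN n (le_trans (le_max_left N 1) hn)
  rw [Real.dist_eq, sub_zero, abs_of_nonneg hpos]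
  linarith

private lemma qnp_b_mul_pow {𝔸 : Type*} [NormedRing 𝔸] [NormedAlgebra ℂ 𝔸]
    (a b : 𝔸) (lam : ℂ) (hlam : lam ≠ 0) (hab : a * b = lam • (b * a)) :
    ∀ i : ℕ, b * a ^ i = (lam⁻¹ ^ i) • (a ^ i * b) := by
  have hba : b * a = lam⁻¹ • (a * b) := by
    rw [hab, smul_smul, inv_mul_cancel₀ hlam, one_smul]
  intro i
  induction i with
  | zero => simp
  | succ i ih =>
    calc b * a ^ (i + 1) = (b * a ^ i) * a := by rw [pow_succ, mul_assoc]
      _ = (lam⁻¹ ^ i) • (a ^ i * b * a) := by rw [ih, smul_mul_assoc]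
      _ = (lam⁻¹ ^ i) • (a ^ i * (lam⁻¹ • (a * b))) := by rw [mul_assoc, hba]
      _ = (lam⁻¹ ^ (i + 1)) • (a ^ (i + 1) * b) := by
          rw [mul_smul_comm, smul_smul, pow_succ, pow_succ, mul_assoc]

open Finset in
private lemma qnp_expand {𝔸 : Type*} [NormedRing 𝔸] [NormedAlgebra ℂ 𝔸]
    (a b : 𝔸) (lam : ℂ) (hlam : lam ≠ 0) (hlam1 : ‖lam⁻¹‖ ≤ 1)
    (hab : a * b = lam • (b * a)) (n : ℕ) :
    ∃ c : ℕ → ℂ, (∀ i, ‖c i‖ ≤ (n.choose i : ℝ)) ∧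
      (a + b) ^ n = ∑ i ∈ range (n + 1), c i • (a ^ i * b ^ (n - i)) := by
  have hba := qnp_b_mul_pow a b lam hlam hab
  induction n with
  | zero =>
    refine ⟨fun i => if i = 0 then 1 else 0, fun i => ?_, by simp⟩
    rcases i with _ | i <;> simp
  | succ n ih =>
    obtain ⟨c, hc, hid⟩ := ih
    have hcn1 : c (n + 1) = 0 := by
      have h := hc (n + 1)
      rw [Nat.choose_succ_self] at h
      exact norm_le_zero_iff.mp (by simpa using h)
    refine ⟨fun i => match i with
      | 0 => c 0
      | (i + 1) => c i + lam⁻¹ ^ (i + 1) * c (i + 1), fun i => ?_, ?_⟩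
    · match i with
      | 0 => simpa using hc 0
      | (i + 1) =>
        calc ‖c i + lam⁻¹ ^ (i + 1) * c (i + 1)‖
            ≤ ‖c i‖ + ‖lam⁻¹‖ ^ (i + 1) * ‖c (i + 1)‖ := by
              refine le_trans (norm_add_le _ _) ?_
              rw [norm_mul, norm_pow]
          _ ≤ (n.choose i : ℝ) + 1 * (n.choose (i + 1) : ℝ) := by
              refine add_le_add (hc i)
                (mul_le_mul (pow_le_one₀ (norm_nonneg _) hlam1) (hc (i + 1))
                  (norm_nonneg _) zero_le_one)
          _ = ((n + 1).choose (i + 1) : ℝ) := by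
              rw [one_mul, Nat.choose_succ_succ]
              push_cast
              ring
    · -- the algebraic identity
      set T1 : 𝔸 := ∑ i ∈ range (n + 1), c i • (a ^ (i + 1) * b ^ (n - i)) with hT1
      set T2 : 𝔸 := ∑ i ∈ range n, (lam⁻¹ ^ (i + 1) * c (i + 1)) • (a ^ (i + 1) * b ^ (n - i))
        with hT2
      set T3 : 𝔸 := c 0 • (a ^ 0 * b ^ (n + 1)) with hT3
      have hLHS : (a + b) ^ (n + 1) = T1 + (T2 + T3) := by
        have hterm : ∀ i ∈ range (n + 1),
            (a + b) * (c i • (a ^ i * b ^ (n - i))) =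
              c i • (a ^ (i + 1) * b ^ (n - i)) +
                (lam⁻¹ ^ i * c i) • (a ^ i * b ^ ((n - i) + 1)) := by
          intro i _
          have h1 : b * (a ^ i * b ^ (n - i)) = (lam⁻¹ ^ i) • (a ^ i * b ^ ((n - i) + 1)) := by
            rw [← mul_assoc, hba i, smul_mul_assoc, mul_assoc, ← pow_succ']
          rw [add_mul, mul_smul_comm, mul_smul_comm, h1, smul_smul, mul_comm (c i),
            ← mul_assoc, ← pow_succ']
        calc (a + b) ^ (n + 1) = (a + b) * (a + b) ^ n := by rw [pow_succ']
          _ = ∑ i ∈ range (n + 1), (a + b) * (c i • (a ^ i * b ^ (n - i))) := by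
              rw [hid, Finset.mul_sum]
          _ = ∑ i ∈ range (n + 1), (c i • (a ^ (i + 1) * b ^ (n - i)) +
                (lam⁻¹ ^ i * c i) • (a ^ i * b ^ ((n - i) + 1))) :=
              Finset.sum_congr rfl hterm
          _ = T1 + ∑ i ∈ range (n + 1), (lam⁻¹ ^ i * c i) • (a ^ i * b ^ ((n - i) + 1)) := by
              rw [Finset.sum_add_distrib]
          _ = T1 + (T2 + T3) := by
              congr 1
              rw [Finset.sum_range_succ']
              congr 1
              · refine Finset.sum_congr rfl fun i hi => ?_
                have hi' : i < n := Finset.mem_range.mp hi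
                rw [show n - (i + 1) + 1 = n - i from by omega]
              · simp [hT3]
      have hRHS : ∑ i ∈ range (n + 1 + 1),
          (fun i => match i with
            | 0 => c 0
            | (i + 1) => c i + lam⁻¹ ^ (i + 1) * c (i + 1)) i • (a ^ i * b ^ (n + 1 - i)) =
          (T1 + T2) + T3 := by
        rw [Finset.sum_range_succ']
        congr 1
        calc ∑ i ∈ range (n + 1),
              (c i + lam⁻¹ ^ (i + 1) * c (i + 1)) • (a ^ (i + 1) * b ^ (n + 1 - (i + 1)))
            = ∑ i ∈ range (n + 1), (c i • (a ^ (i + 1) * b ^ (n - i)) +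
                (lam⁻¹ ^ (i + 1) * c (i + 1)) • (a ^ (i + 1) * b ^ (n - i))) := by
              refine Finset.sum_congr rfl fun i hi => ?_
              rw [add_smul, Nat.succ_sub_succ]
          _ = T1 + ∑ i ∈ range (n + 1),
                (lam⁻¹ ^ (i + 1) * c (i + 1)) • (a ^ (i + 1) * b ^ (n - i)) := by
              rw [Finset.sum_add_distrib]
          _ = T1 + T2 := by
              rw [Finset.sum_range_succ, hcn1]
              simp [hT2]
      rw [hLHS, hRHS, add_assoc]

open Finset in
private lemma qnp_key {𝔸 : Type*} [NormedRing 𝔸] [NormedAlgebra ℂ 𝔸]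
    (a b : 𝔸) (lam : ℂ) (hlam : lam ≠ 0) (hlam1 : ‖lam⁻¹‖ ≤ 1)
    (ha : Tendsto (fun n : ℕ => ‖a ^ n‖ ^ (1 / (n : ℝ))) atTop (nhds 0))
    (hb : Tendsto (fun n : ℕ => ‖b ^ n‖ ^ (1 / (n : ℝ))) atTop (nhds 0))
    (hab : a * b = lam • (b * a)) :
    Tendsto (fun n : ℕ => ‖(a + b) ^ n‖ ^ (1 / (n : ℝ))) atTop (nhds 0) := by
  apply qnp_tendsto_of_bounds
  intro ε hε
  obtain ⟨Ca, hCa1, hCa⟩ := qnp_growth_bound a ha (half_pos hε)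
  obtain ⟨Cb, hCb1, hCb⟩ := qnp_growth_bound b hb (half_pos hε)
  refine ⟨Ca * Cb, (by nlinarith : (1:ℝ) ≤ Ca * Cb), fun n => ?_⟩
  obtain ⟨c, hc, hid⟩ := qnp_expand a b lam hlam hlam1 hab n
  calc ‖(a + b) ^ n‖ ≤ ∑ i ∈ range (n + 1), ‖c i • (a ^ i * b ^ (n - i))‖ := by
        rw [hid]; exact norm_sum_le _ _
    _ ≤ ∑ i ∈ range (n + 1),
        (n.choose i : ℝ) * ((Ca * (ε / 2) ^ i) * (Cb * (ε / 2) ^ (n - i))) := by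
        refine Finset.sum_le_sum fun i _ => ?_
        rw [norm_smul]
        have h1 : ‖a ^ i * b ^ (n - i)‖ ≤ (Ca * (ε / 2) ^ i) * (Cb * (ε / 2) ^ (n - i)) :=
          le_trans (norm_mul_le _ _)
            (mul_le_mul (hCa i) (hCb (n - i)) (norm_nonneg _) (by positivity))
        exact mul_le_mul (hc i) h1 (norm_nonneg _) (Nat.cast_nonneg _)
    _ = ∑ i ∈ range (n + 1), (Ca * Cb) * ((ε / 2) ^ n * (n.choose i : ℝ)) := by
        refine Finset.sum_congr rfl fun i hi => ?_
        have hi' : i ≤ n := Nat.lt_succ_iff.mp (Finset.mem_range.mp hi)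
        have h2 : (ε / 2) ^ i * (ε / 2) ^ (n - i) = (ε / 2) ^ n := by
          rw [← pow_add, Nat.add_sub_cancel' hi']
        rw [← h2]; ring
    _ = (Ca * Cb) * ε ^ n := by
        rw [← Finset.mul_sum, ← Finset.mul_sum, ← Nat.cast_sum, Nat.sum_range_choose]
        have h3 : (ε / 2) ^ n * ((2 ^ n : ℕ) : ℝ) = ε ^ n := by
          push_cast
          rw [div_pow, div_mul_cancel₀]
          positivity
        rw [h3]

/-- If `a` and `b` are quasinilpotent (`‖xⁿ‖^(1/n) → 0`) and
`a*b = λ • (b*a)` with `λ ≠ 0`, then `a + b` is quasinilpotent. -/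
theorem add_quasinilpotent_of_commute_up_to_factor
    {𝔸 : Type*} [NormedRing 𝔸] [NormedAlgebra ℂ 𝔸] [CompleteSpace 𝔸]
    (a b : 𝔸) (lam : ℂ) (hlam : lam ≠ 0)
    (ha : Tendsto (fun n : ℕ => ‖a ^ n‖ ^ (1 / (n : ℝ))) atTop (nhds 0))
    (hb : Tendsto (fun n : ℕ => ‖b ^ n‖ ^ (1 / (n : ℝ))) atTop (nhds 0))
    (hab : a * b = lam • (b * a)) :
    Tendsto (fun n : ℕ => ‖(a + b) ^ n‖ ^ (1 / (n : ℝ))) atTop (nhds 0) := by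
  rcases le_total ‖lam⁻¹‖ 1 with h | h
  · exact qnp_key a b lam hlam h ha hb hab
  · have hlam' : lam⁻¹ ≠ 0 := inv_ne_zero hlam
    have h1 : ‖(lam⁻¹)⁻¹‖ ≤ 1 := by
      rw [inv_inv]
      rw [norm_inv] at h
      have h0 : 0 < ‖lam‖ := norm_pos_iff.mpr hlam
      rw [one_le_inv_iff₀] at h
      exact h.2
    have hba : b * a = lam⁻¹ • (a * b) := by
      rw [hab, smul_smul, inv_mul_cancel₀ hlam, one_smul]
    have := qnp_key b a lam⁻¹ hlam' h1 hb ha hba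
    simpa [add_comm b a] using this
end

section
/- (Cline's formula) Let A be a complex unital Banach algebra and a, b ∈ A. If ab has a generalized Drazin inverse c, then ba has a generalized Drazin inverse, given by b c² a. -/
variable {𝔸 : Type*} [NormedRing 𝔸] [NormedAlgebra ℂ 𝔸] [CompleteSpace 𝔸]

/-- Quasinilpotent: spectral radius zero. -/
def IsQuasinilpotent (a : 𝔸) : Prop := spectralRadius ℂ a = 0

/-- `b` is a g-Drazin inverse of `a`. -/
def IsGDrazinInverse (a b : 𝔸) : Prop :=
  Commute a b ∧ b * a * b = b ∧ IsQuasinilpotent (a - a ^ 2 * b)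

open Filter ENNReal Topology in
/-- If `x` commutes with a quasinilpotent `y`, then `x * y` is quasinilpotent. -/
lemma aux_spectralRadius_mul_eq_zero_of_commute (x y : 𝔸) (hxy : Commute x y)
    (hy : spectralRadius ℂ y = 0) : spectralRadius ℂ (x * y) = 0 := by
  refine le_antisymm ?_ zero_le
  have h₁ := spectrum.spectralRadius_le_liminf_pow_nnnorm_pow_one_div ℂ (x * y)
  refine h₁.trans ?_
  have hg : Tendsto (fun n : ℕ => (‖x‖₊ : ℝ≥0∞) * (‖y ^ n‖₊ : ℝ≥0∞) ^ (1 / n : ℝ)) atTop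
      (𝓝 0) := by
    have := spectrum.pow_nnnorm_pow_one_div_tendsto_nhds_spectralRadius y
    rw [hy] at this
    simpa using ENNReal.Tendsto.const_mul this (Or.inr ENNReal.coe_ne_top)
  have hle : ∀ᶠ n : ℕ in atTop, (‖(x * y) ^ n‖₊ : ℝ≥0∞) ^ (1 / n : ℝ) ≤
      (‖x‖₊ : ℝ≥0∞) * (‖y ^ n‖₊ : ℝ≥0∞) ^ (1 / n : ℝ) := by
    filter_upwards [eventually_ge_atTop 1] with n hn
    have hn' : (0:ℝ) ≤ 1 / n := by positivity
    have h2 : (‖(x * y) ^ n‖₊ : ℝ≥0∞) ≤ (‖x ^ n‖₊ : ℝ≥0∞) * (‖y ^ n‖₊ : ℝ≥0∞) := by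
      rw [hxy.mul_pow]
      exact_mod_cast nnnorm_mul_le _ _
    calc (‖(x * y) ^ n‖₊ : ℝ≥0∞) ^ (1 / n : ℝ)
        ≤ ((‖x ^ n‖₊ : ℝ≥0∞) * (‖y ^ n‖₊ : ℝ≥0∞)) ^ (1 / n : ℝ) :=
          ENNReal.rpow_le_rpow h2 hn'
      _ = (‖x ^ n‖₊ : ℝ≥0∞) ^ (1 / n : ℝ) * (‖y ^ n‖₊ : ℝ≥0∞) ^ (1 / n : ℝ) :=
          ENNReal.mul_rpow_of_nonneg _ _ hn'
      _ ≤ (‖x‖₊ : ℝ≥0∞) * (‖y ^ n‖₊ : ℝ≥0∞) ^ (1 / n : ℝ) := by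
          gcongr
          have hx : (‖x ^ n‖₊ : ℝ≥0∞) ≤ ((‖x‖₊ : ℝ≥0∞)) ^ (n : ℕ) := by
            rw [← ENNReal.coe_pow]
            exact_mod_cast nnnorm_pow_le' x (by omega)
          calc (‖x ^ n‖₊ : ℝ≥0∞) ^ (1 / n : ℝ)
              ≤ ((‖x‖₊ : ℝ≥0∞) ^ (n : ℕ)) ^ (1 / n : ℝ) := ENNReal.rpow_le_rpow hx hn'
            _ = (‖x‖₊ : ℝ≥0∞) ^ ((n : ℝ) * (1 / n : ℝ)) := by
                rw [← ENNReal.rpow_natCast, ← ENNReal.rpow_mul]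
            _ = (‖x‖₊ : ℝ≥0∞) := by
                rw [mul_one_div, div_self (by exact_mod_cast by omega : (n:ℝ) ≠ 0),
                  ENNReal.rpow_one]
  calc atTop.liminf (fun n : ℕ => (‖(x * y) ^ n‖₊ : ℝ≥0∞) ^ (1 / n : ℝ))
      ≤ atTop.liminf (fun n : ℕ => (‖x‖₊ : ℝ≥0∞) * (‖y ^ n‖₊ : ℝ≥0∞) ^ (1 / n : ℝ)) :=
        liminf_le_liminf hle
    _ = 0 := hg.liminf_eq

open ENNReal in
/-- Spectral radius is invariant under swapping factors. -/
lemma aux_spectralRadius_mul_comm (x y : 𝔸) :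
    spectralRadius ℂ (x * y) = spectralRadius ℂ (y * x) := by
  have key : ∀ u v : 𝔸, spectralRadius ℂ (u * v) ≤ spectralRadius ℂ (v * u) := by
    intro u v
    have hstep : ∀ k ∈ spectrum ℂ (u * v), (‖k‖₊ : ℝ≥0∞) ≤ spectralRadius ℂ (v * u) := by
      intro k hk
      rcases eq_or_ne k 0 with rfl | hk0
      · simp
      · have hmem : k ∈ spectrum ℂ (v * u) := by
          have hswap := spectrum.nonzero_mul_comm (𝕜 := ℂ) u v
          have hk' : k ∈ spectrum ℂ (u * v) \ {0} := ⟨hk, hk0⟩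
          rw [hswap] at hk'
          exact hk'.1
        exact le_iSup₂ (f := fun k (_ : k ∈ spectrum ℂ (v * u)) => (‖k‖₊ : ℝ≥0∞)) k hmem
    exact iSup₂_le hstep
  exact le_antisymm (key x y) (key y x)

/-- Cline's formula: if `c` is a g-Drazin inverse of `a*b`,
then `b*c²*a` is a g-Drazin inverse of `b*a`. -/
theorem cline_formula (a b c : 𝔸) (h : IsGDrazinInverse (a * b) c) :
    IsGDrazinInverse (b * a) (b * c ^ 2 * a) := by
  obtain ⟨hcom, hinv, hq⟩ := h
  have h1 : a * b * c = c * (a * b) := hcom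
  have h2 : a * b * c ^ 2 = c ^ 2 * (a * b) := hcom.pow_right 2
  refine ⟨?_, ?_, ?_⟩
  · -- Commute (b*a) (b*c^2*a)
    show b * a * (b * c ^ 2 * a) = b * c ^ 2 * a * (b * a)
    calc b * a * (b * c ^ 2 * a) = b * (a * b * c ^ 2) * a := by
          simp only [mul_assoc]
      _ = b * (c ^ 2 * (a * b)) * a := by rw [h2]
      _ = b * c ^ 2 * a * (b * a) := by simp only [mul_assoc]
  · -- d * (b*a) * d = d
    have hcc : Commute c (a * b) := hcom.symm
    have hkey : c ^ 2 * (a * b) ^ 2 * c ^ 2 = c ^ 2 := by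
      have hmp : (c * (a * b)) ^ 2 = c ^ 2 * (a * b) ^ 2 := hcc.mul_pow 2
      calc c ^ 2 * (a * b) ^ 2 * c ^ 2 = (c * (a * b)) ^ 2 * c ^ 2 := by rw [hmp]
        _ = c * (a * b) * (c * (a * b) * c * c) := by
            simp only [pow_two, mul_assoc]
        _ = c * (a * b) * (c * c) := by rw [hinv]
        _ = c * (a * b) * c * c := by simp only [mul_assoc]
        _ = c * c := by rw [hinv]
        _ = c ^ 2 := (pow_two c).symm
    calc b * c ^ 2 * a * (b * a) * (b * c ^ 2 * a)
        = b * (c ^ 2 * (a * b) ^ 2 * c ^ 2) * a := by simp only [pow_two, mul_assoc]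
      _ = b * c ^ 2 * a := by rw [hkey]
  · -- quasinilpotency
    have htc : Commute (a * b) c := hcom
    have hrw : b * a - (b * a) ^ 2 * (b * c ^ 2 * a)
        = b * (a - (a * b) ^ 2 * (c ^ 2 * a)) := by
      rw [mul_sub]
      simp only [pow_two, mul_assoc]
    have hswap : spectralRadius ℂ (b * (a - (a * b) ^ 2 * (c ^ 2 * a)))
        = spectralRadius ℂ ((a - (a * b) ^ 2 * (c ^ 2 * a)) * b) :=
      aux_spectralRadius_mul_comm _ _
    have e3 : (a - (a * b) ^ 2 * (c ^ 2 * a)) * b = (a * b) - (a * b) ^ 3 * c ^ 2 := by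
      rw [sub_mul]
      congr 1
      calc (a * b) ^ 2 * (c ^ 2 * a) * b = (a * b) ^ 2 * (c ^ 2 * (a * b)) := by
            simp only [mul_assoc]
        _ = (a * b) ^ 2 * (a * b * c ^ 2) := by rw [← h2]
        _ = (a * b) ^ 2 * (a * b) * c ^ 2 := by simp only [mul_assoc]
        _ = (a * b) ^ 3 * c ^ 2 := by rw [← pow_succ]
    have hrw2 : (a * b) - (a * b) ^ 3 * c ^ 2
        = (1 + (a * b) * c) * ((a * b) - (a * b) ^ 2 * c) := by
      set t := a * b with ht
      clear_value t
      have e1 : t * c * t = t ^ 2 * c := by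
        calc t * c * t = t * (c * t) := by rw [mul_assoc]
          _ = t * (t * c) := by rw [htc.symm.eq]
          _ = t * t * c := by rw [mul_assoc]
          _ = t ^ 2 * c := by rw [← pow_two]
      have e2 : t * c * (t ^ 2 * c) = t ^ 3 * c ^ 2 := by
        calc t * c * (t ^ 2 * c) = t * (c * t ^ 2 * c) := by simp only [mul_assoc]
          _ = t * (t ^ 2 * c * c) := by rw [(htc.symm.pow_right 2).eq]
          _ = t * t ^ 2 * (c * c) := by simp only [mul_assoc]
          _ = t ^ 3 * c ^ 2 := by rw [← pow_succ', ← pow_two]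
      calc t - t ^ 3 * c ^ 2 = t - t ^ 2 * c + (t ^ 2 * c - t ^ 3 * c ^ 2) := by abel
        _ = t - t ^ 2 * c + (t * c * t - t * c * (t ^ 2 * c)) := by rw [e1, e2]
        _ = (1 + t * c) * (t - t ^ 2 * c) := by noncomm_ring
    have hcommute : Commute (1 + (a * b) * c) ((a * b) - (a * b) ^ 2 * c) := by
      have h_tc_t : Commute ((a * b) * c) (a * b) := (Commute.refl (a * b)).mul_left htc.symm
      have h_tc_c : Commute ((a * b) * c) c := htc.mul_left (Commute.refl c)
      have h_tc_t2c : Commute ((a * b) * c) ((a * b) ^ 2 * c) :=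
        (h_tc_t.pow_right 2).mul_right h_tc_c
      exact ((Commute.one_left _).add_left h_tc_t).sub_right
        ((Commute.one_left _).add_left h_tc_t2c)
    have hfin : spectralRadius ℂ ((1 + (a * b) * c) * ((a * b) - (a * b) ^ 2 * c)) = 0 :=
      aux_spectralRadius_mul_eq_zero_of_commute _ _ hcommute hq
    show spectralRadius ℂ (b * a - (b * a) ^ 2 * (b * c ^ 2 * a)) = 0
    rw [hrw, hswap, e3, hrw2, hfin]
end

section
/- Let A be a complex unital Banach algebra, a ∈ A quasinilpotent, and b ∈ A with g-Drazin inverse b^d. Let λ ≠ 0 be a complex number and write b^π = 1 − b b^d. If ab = λ b a b^π, then a + b has a generalized Drazin inverse given by (a+b)^d = b^d + Σ_{n≥0} (b^d)^{n+2} a (a+b)^n. -/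
variable {𝔸 : Type*} [NormedRing 𝔸] [NormedAlgebra ℂ 𝔸] [CompleteSpace 𝔸]

lemma aux_unit (x : 𝔸) (m : ℕ) (hm : ‖x ^ m‖ < 1) : IsUnit (1 - x) := by
  set S : 𝔸 := ∑ i ∈ Finset.range m, x ^ i with hS
  set w : 𝔸ˣ := Units.oneSub (x ^ m) hm with hw
  have hwval : (w : 𝔸) = 1 - x ^ m := rfl
  have h1 : (1 - x) * S = (w : 𝔸) := by
    have h := mul_geom_sum x m
    have h' : (1 - x) * S = -((x - 1) * S) := by noncomm_ring
    rw [h', hS, h, hwval, neg_sub]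
  have h2 : S * (1 - x) = (w : 𝔸) := by
    have h := geom_sum_mul x m
    have h' : S * (1 - x) = -(S * (x - 1)) := by noncomm_ring
    rw [h', hS, h, hwval, neg_sub]
  have hcS : Commute S ((w : 𝔸)) := by
    rw [hwval]
    exact (Commute.one_right S).sub_right
      (Commute.sum_left _ _ _ fun i _ => (Commute.refl x).pow_pow i m)
  have hcSinv : Commute S ((↑w⁻¹ : 𝔸)) := hcS.units_inv_right
  have left : (1 - x) * (S * ↑w⁻¹) = 1 := by
    rw [← mul_assoc, h1]; exact w.mul_inv
  have right : (S * (↑w⁻¹ : 𝔸)) * (1 - x) = 1 := by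
    rw [hcSinv.eq, mul_assoc, h2]; exact w.inv_mul
  exact ⟨⟨1 - x, S * ↑w⁻¹, left, right⟩, rfl⟩

lemma quasi_of_units (x : 𝔸) (h : ∀ z : ℂ, IsUnit (1 - z • x)) : IsQuasinilpotent x := by
  have hs : spectrum ℂ x ⊆ {0} := by
    intro z hz
    simp only [Set.mem_singleton_iff]
    by_contra hz0
    apply spectrum.notMem_iff.mpr _ hz
    have key : algebraMap ℂ 𝔸 z - x = algebraMap ℂ 𝔸 z * (1 - z⁻¹ • x) := by
      rw [mul_sub, mul_one]
      congr 1
      rw [← Algebra.smul_def, smul_smul, mul_inv_cancel₀ hz0, one_smul]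
    rw [key]
    exact ((algebraMap ℂ 𝔸).isUnit_map (isUnit_iff_ne_zero.mpr hz0)).mul (h z⁻¹)
  unfold IsQuasinilpotent spectralRadius
  rw [← le_zero_iff]
  refine iSup₂_le fun k hk => ?_
  rcases hs hk with rfl
  simp

lemma quasi_of_norm_pow_le (x : 𝔸)
    (h : ∀ ε : ℝ, 0 < ε → ∃ C : ℝ, 0 < C ∧ ∀ n : ℕ, ‖x ^ n‖ ≤ C * ε ^ n) :
    IsQuasinilpotent x := by
  apply quasi_of_units
  intro z
  obtain ⟨C, hC, hb⟩ := h ((2 * (‖z‖ + 1))⁻¹) (by positivity)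
  obtain ⟨m, hm⟩ := pow_unbounded_of_one_lt C (y := 2) one_lt_two
  apply aux_unit _ m
  have h1 : ‖(z • x) ^ m‖ = ‖z‖ ^ m * ‖x ^ m‖ := by
    rw [smul_pow, norm_smul, norm_pow]
  have h2 : ‖z‖ ^ m * ‖x ^ m‖ ≤ ‖z‖ ^ m * (C * ((2 * (‖z‖ + 1))⁻¹) ^ m) := by
    exact mul_le_mul_of_nonneg_left (hb m) (by positivity)
  have h3 : ‖z‖ ^ m * (C * ((2 * (‖z‖ + 1))⁻¹) ^ m) = C * (‖z‖ * (2 * (‖z‖ + 1))⁻¹) ^ m := by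
    rw [mul_pow]; ring
  have h4 : ‖z‖ * (2 * (‖z‖ + 1))⁻¹ ≤ 2⁻¹ := by
    rw [mul_inv]
    have h5 : ‖z‖ * ((‖z‖ + 1)⁻¹) ≤ 1 := by
      rw [← div_eq_mul_inv, div_le_one (by positivity)]; linarith
    calc ‖z‖ * (2⁻¹ * (‖z‖ + 1)⁻¹) = 2⁻¹ * (‖z‖ * (‖z‖ + 1)⁻¹) := by ring
    _ ≤ 2⁻¹ * 1 := by nlinarith [norm_nonneg z]
    _ = 2⁻¹ := mul_one _
  have h6 : C * (‖z‖ * (2 * (‖z‖ + 1))⁻¹) ^ m ≤ C * (2⁻¹) ^ m := by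
    apply mul_le_mul_of_nonneg_left _ hC.le
    exact pow_le_pow_left₀ (by positivity) h4 m
  have h7 : C * (2⁻¹:ℝ) ^ m < 1 := by
    rw [inv_pow]
    rw [mul_inv_lt_iff₀ (by positivity), one_mul]
    exact hm
  calc ‖(z • x) ^ m‖ = ‖z‖ ^ m * ‖x ^ m‖ := h1
    _ ≤ _ := h2
    _ = _ := h3
    _ ≤ _ := h6
    _ < 1 := h7

lemma norm_pow_le_of_quasi (x : 𝔸) (hx : IsQuasinilpotent x) :
    ∀ ε : ℝ, 0 < ε → ∃ C : ℝ, 0 < C ∧ ∀ n : ℕ, ‖x ^ n‖ ≤ C * ε ^ n := by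
  intro ε hε
  have hg := spectrum.pow_norm_pow_one_div_tendsto_nhds_spectralRadius x
  rw [hx] at hg
  have hev : ∀ᶠ n : ℕ in Filter.atTop,
      ENNReal.ofReal (‖x ^ n‖ ^ (1 / (n:ℝ))) < ENNReal.ofReal ε :=
    hg.eventually_lt_const (by simpa using hε)
  obtain ⟨N, hN⟩ := Filter.eventually_atTop.mp hev
  have key : ∀ n : ℕ, N + 1 ≤ n → ‖x ^ n‖ ≤ ε ^ n := by
    intro n hn
    have hn0 : n ≠ 0 := by omega
    have h1 : ‖x ^ n‖ ^ (1 / (n:ℝ)) < ε :=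
      (ENNReal.ofReal_lt_ofReal_iff hε).mp (hN n (by omega))
    have h2 : (‖x ^ n‖ ^ (1 / (n:ℝ))) ^ n ≤ ε ^ n :=
      pow_le_pow_left₀ (Real.rpow_nonneg (norm_nonneg _) _) h1.le n
    rwa [one_div, Real.rpow_inv_natCast_pow (norm_nonneg _) hn0] at h2
  set C : ℝ := (∑ i ∈ Finset.range (N + 1), ‖x ^ i‖ / ε ^ i) + 1 with hC
  refine ⟨C, by positivity, fun n => ?_⟩
  rcases le_or_gt (N + 1) n with hn | hn
  · calc ‖x ^ n‖ ≤ ε ^ n := key n hn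
      _ ≤ C * ε ^ n := le_mul_of_one_le_left (pow_nonneg hε.le n) (by
        have := Finset.sum_nonneg (fun i (_ : i ∈ Finset.range (N+1)) =>
          div_nonneg (norm_nonneg (x ^ i)) (pow_nonneg hε.le i))
        rw [hC]; linarith)
  · have hmem : n ∈ Finset.range (N + 1) := Finset.mem_range.mpr hn
    have h1 : ‖x ^ n‖ / ε ^ n ≤ C := by
      rw [hC]
      have := Finset.single_le_sum (f := fun i => ‖x ^ i‖ / ε ^ i)
        (fun i _ => div_nonneg (norm_nonneg _) (pow_nonneg hε.le i)) hmem
      linarith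
    rw [div_le_iff₀ (pow_pos hε n)] at h1
    linarith

lemma geom_pack (x : 𝔸) {C r : ℝ} (hr0 : 0 ≤ r) (hr : r < 1)
    (hC : ∀ n : ℕ, ‖x ^ n‖ ≤ C * r ^ n) :
    Summable (fun n : ℕ => x ^ n) ∧ (1 - x) * (∑' n : ℕ, x ^ n) = 1 ∧
      (∑' n : ℕ, x ^ n) * (1 - x) = 1 ∧ ‖∑' n : ℕ, x ^ n‖ ≤ C * (1 - r)⁻¹ := by
  have hgs : Summable (fun n : ℕ => C * r ^ n) :=
    (summable_geometric_of_lt_one hr0 hr).mul_left C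
  have hs : Summable (fun n : ℕ => x ^ n) :=
    Summable.of_norm_bounded hgs hC
  set S : 𝔸 := ∑' n : ℕ, x ^ n with hS
  have hzero : S = x ^ 0 + ∑' n : ℕ, x ^ (n + 1) := Summable.tsum_eq_zero_add hs
  have hxS : x * S = ∑' n : ℕ, x ^ (n + 1) := by
    rw [← hs.tsum_mul_left x]
    exact tsum_congr fun n => (pow_succ' x n).symm
  have hSx : S * x = ∑' n : ℕ, x ^ (n + 1) := by
    rw [← hs.tsum_mul_right x]
    exact tsum_congr fun n => (pow_succ x n).symm
  have h1 : (1 - x) * S = 1 := by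
    rw [sub_mul, one_mul, hxS]
    rw [pow_zero] at hzero
    rw [hzero]; abel
  have h2 : S * (1 - x) = 1 := by
    rw [mul_sub, mul_one, hSx]
    rw [pow_zero] at hzero
    rw [hzero]; abel
  refine ⟨hs, h1, h2, ?_⟩
  have hns : Summable (fun n : ℕ => ‖x ^ n‖) :=
    Summable.of_nonneg_of_le (fun n => norm_nonneg _) hC hgs
  calc ‖S‖ ≤ ∑' n : ℕ, ‖x ^ n‖ := norm_tsum_le_tsum_norm hns
    _ ≤ ∑' n : ℕ, C * r ^ n := hns.tsum_le_tsum hC hgs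
    _ = C * (1 - r)⁻¹ := by rw [tsum_mul_left, tsum_geometric_of_lt_one hr0 hr]

lemma quasi_add_core {u v : 𝔸} {lam : ℂ} (hlam1 : ‖lam‖ ≤ 1)
    (hu : IsQuasinilpotent u) (hv : IsQuasinilpotent v)
    (huv : u * v = lam • (v * u)) : IsQuasinilpotent (u + v) := by
  apply quasi_of_units
  intro z
  set Z : ℝ := ‖z‖ with hZ
  obtain ⟨Cu, hCu, hbu⟩ := norm_pow_le_of_quasi u hu ((2 * (Z + 1))⁻¹) (by positivity)
  set g : ℂ → 𝔸 := fun μ => ∑' n : ℕ, (μ • u) ^ n with hgdef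
  set M : ℝ := Cu * (1 - 2⁻¹)⁻¹ with hM
  have hM0 : 0 < M := by rw [hM]; norm_num; positivity
  -- uniform geometric bound on the disc of radius Z
  have hkey : ∀ μ : ℂ, ‖μ‖ ≤ Z → ∀ n : ℕ, ‖(μ • u) ^ n‖ ≤ Cu * (2⁻¹ : ℝ) ^ n := by
    intro μ hμ n
    have h1 : ‖(μ • u) ^ n‖ = ‖μ‖ ^ n * ‖u ^ n‖ := by rw [smul_pow, norm_smul, norm_pow]
    have h2 : ‖μ‖ ^ n * ‖u ^ n‖ ≤ Z ^ n * (Cu * ((2 * (Z + 1))⁻¹) ^ n) := by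
      apply mul_le_mul (pow_le_pow_left₀ (norm_nonneg μ) hμ n) (hbu n) (norm_nonneg _)
        (by positivity)
    have h3 : Z ^ n * (Cu * ((2 * (Z + 1))⁻¹) ^ n) = Cu * (Z * (2 * (Z + 1))⁻¹) ^ n := by
      rw [mul_pow]; ring
    have h4 : Z * (2 * (Z + 1))⁻¹ ≤ 2⁻¹ := by
      rw [mul_inv, ← mul_assoc, mul_comm Z (2:ℝ)⁻¹, mul_assoc]
      have hz0 : (0:ℝ) ≤ Z := norm_nonneg z
      have : Z * (Z + 1)⁻¹ ≤ 1 := by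
        rw [← div_eq_mul_inv, div_le_one (by positivity)]; linarith
      nlinarith
    have h5 : Cu * (Z * (2 * (Z + 1))⁻¹) ^ n ≤ Cu * (2⁻¹ : ℝ) ^ n :=
      mul_le_mul_of_nonneg_left (pow_le_pow_left₀ (by positivity) h4 n) hCu.le
    linarith [h1, h2, h3 ▸ h2]
  have gp : ∀ μ : ℂ, ‖μ‖ ≤ Z →
      (1 - μ • u) * g μ = 1 ∧ g μ * (1 - μ • u) = 1 ∧ ‖g μ‖ ≤ M := by
    intro μ hμ
    obtain ⟨_, h1, h2, h3⟩ := geom_pack (μ • u) (by norm_num) (by norm_num) (hkey μ hμ)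
    exact ⟨h1, h2, h3⟩
  -- membership of the relevant scalars in the disc
  have hmem : ∀ m : ℕ, ∀ μ : ℂ, ‖μ‖ ≤ Z → ‖lam ^ m * μ‖ ≤ Z := by
    intro m μ hμ
    rw [norm_mul, norm_pow]
    calc ‖lam‖ ^ m * ‖μ‖ ≤ 1 * ‖μ‖ :=
      mul_le_mul_of_nonneg_right (pow_le_one₀ (norm_nonneg _) hlam1) (norm_nonneg μ)
    _ = ‖μ‖ := one_mul _
    _ ≤ Z := hμ
  have hmem1 : ∀ μ : ℂ, ‖μ‖ ≤ Z → ‖lam * μ‖ ≤ Z := by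
    intro μ hμ; have := hmem 1 μ hμ; rwa [pow_one] at this
  -- the swap identity
  have hsw : ∀ μ : ℂ, ‖μ‖ ≤ Z → g μ * v = v * g (lam * μ) := by
    intro μ hμ
    have halg : v * (1 - (lam * μ) • u) = (1 - μ • u) * v := by
      rw [mul_sub, sub_mul, mul_one, one_mul]
      congr 1
      rw [mul_smul_comm, smul_mul_assoc, huv, smul_smul, mul_comm μ lam]
    obtain ⟨hA1, hA2, _⟩ := gp μ hμ
    obtain ⟨hB1, hB2, _⟩ := gp (lam * μ) (hmem1 μ hμ)
    calc g μ * v = g μ * v * ((1 - (lam * μ) • u) * g (lam * μ)) := by rw [hB1, mul_one]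
      _ = g μ * (v * (1 - (lam * μ) • u)) * g (lam * μ) := by
          rw [mul_assoc, mul_assoc, mul_assoc]
      _ = g μ * ((1 - μ • u) * v) * g (lam * μ) := by rw [halg]
      _ = (g μ * (1 - μ • u)) * v * g (lam * μ) := by noncomm_ring
      _ = v * g (lam * μ) := by rw [hA2, one_mul]
  -- iterated swap through powers of v
  have hswpow : ∀ m : ℕ, ∀ μ : ℂ, ‖μ‖ ≤ Z → g μ * v ^ m = v ^ m * g (lam ^ m * μ) := by
    intro m
    induction m with
    | zero => intro μ hμ; simp
    | succ m ih =>
      intro μ hμ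
      calc g μ * v ^ (m + 1) = (g μ * v) * v ^ m := by rw [pow_succ']; noncomm_ring
        _ = v * (g (lam * μ) * v ^ m) := by rw [hsw μ hμ, mul_assoc]
        _ = v * (v ^ m * g (lam ^ m * (lam * μ))) := by rw [ih (lam * μ) (hmem1 μ hμ)]
        _ = v ^ (m + 1) * g (lam ^ (m + 1) * μ) := by
            rw [← mul_assoc, ← pow_succ']
            congr 2
            ring
  -- the product elements K m
  set K : ℕ → 𝔸 := fun m => Nat.rec (1 : 𝔸) (fun m Km => g (lam ^ (m + 1) * z) * Km) m
    with hKdef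
  have hK0 : K 0 = 1 := rfl
  have hKS : ∀ m, K (m + 1) = g (lam ^ (m + 1) * z) * K m := fun m => rfl
  have hKnorm : ∀ m, ‖K m‖ ≤ ‖(1 : 𝔸)‖ * M ^ m := by
    intro m
    induction m with
    | zero => simp [hK0]
    | succ m ih =>
      rw [hKS]
      calc ‖g (lam ^ (m + 1) * z) * K m‖ ≤ ‖g (lam ^ (m + 1) * z)‖ * ‖K m‖ := norm_mul_le _ _
        _ ≤ M * (‖(1 : 𝔸)‖ * M ^ m) := by
            apply mul_le_mul (gp _ (hmem (m+1) z le_rfl)).2.2 ih (norm_nonneg _) hM0.le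
        _ = ‖(1 : 𝔸)‖ * M ^ (m + 1) := by ring
  have hgvK : ∀ m : ℕ, (g z * v) ^ m = v ^ m * K m := by
    intro m
    induction m with
    | zero => simp [hK0]
    | succ m ih =>
      calc (g z * v) ^ (m + 1) = (g z * v) * (g z * v) ^ m := by rw [pow_succ']
        _ = g z * v * (v ^ m * K m) := by rw [ih]
        _ = g z * v ^ (m + 1) * K m := by rw [pow_succ' v m]; noncomm_ring
        _ = v ^ (m + 1) * g (lam ^ (m + 1) * z) * K m := by rw [hswpow (m + 1) z le_rfl]
        _ = v ^ (m + 1) * K (m + 1) := by rw [hKS, mul_assoc]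
  -- now bound powers of y := z • (g z * v)
  set δ : ℝ := ((Z + 1) * (M + 1) * 2)⁻¹ with hδ
  have hδ0 : 0 < δ := by rw [hδ]; positivity
  obtain ⟨Cv, hCv, hbv⟩ := norm_pow_le_of_quasi v hv δ hδ0
  set y : 𝔸 := z • (g z * v) with hy
  have hyn : ∀ m : ℕ, ‖y ^ m‖ ≤ (Cv * (‖(1 : 𝔸)‖ + 1)) * (2⁻¹ : ℝ) ^ m := by
    intro m
    have h1 : y ^ m = z ^ m • (v ^ m * K m) := by rw [hy, smul_pow, hgvK]
    have h2 : ‖y ^ m‖ ≤ Z ^ m * (‖v ^ m‖ * ‖K m‖) := by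
      rw [h1, norm_smul, norm_pow]
      exact mul_le_mul_of_nonneg_left (norm_mul_le _ _) (by positivity)
    have h3 : ‖v ^ m‖ * ‖K m‖ ≤ (Cv * δ ^ m) * ((‖(1 : 𝔸)‖ + 1) * M ^ m) := by
      apply mul_le_mul (hbv m) ((hKnorm m).trans ?_) (norm_nonneg _) (by positivity)
      exact mul_le_mul_of_nonneg_right (by linarith) (by positivity)
    have h4 : Z ^ m * ((Cv * δ ^ m) * ((‖(1 : 𝔸)‖ + 1) * M ^ m))
        = (Cv * (‖(1 : 𝔸)‖ + 1)) * (Z * δ * M) ^ m := by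
      rw [mul_pow, mul_pow]; ring
    have h5 : Z * δ * M ≤ 2⁻¹ := by
      rw [hδ, mul_inv, mul_inv]
      have hz0 : (0:ℝ) ≤ Z := norm_nonneg z
      have e1 : Z * (Z + 1)⁻¹ ≤ 1 := by
        rw [← div_eq_mul_inv, div_le_one (by positivity)]; linarith
      have e2 : M * (M + 1)⁻¹ ≤ 1 := by
        rw [← div_eq_mul_inv, div_le_one (by positivity)]; linarith
      have e3 : Z * ((Z + 1)⁻¹ * (M + 1)⁻¹ * 2⁻¹) * M
          = (Z * (Z + 1)⁻¹) * (M * (M + 1)⁻¹) * 2⁻¹ := by ring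
      rw [e3]
      have h01 : (0:ℝ) ≤ Z * (Z + 1)⁻¹ := by positivity
      have h02 : (0:ℝ) ≤ M * (M + 1)⁻¹ := by positivity
      nlinarith
    have h6 : (Z * δ * M) ^ m ≤ (2⁻¹ : ℝ) ^ m :=
      pow_le_pow_left₀ (by positivity) h5 m
    calc ‖y ^ m‖ ≤ Z ^ m * (‖v ^ m‖ * ‖K m‖) := h2
      _ ≤ Z ^ m * ((Cv * δ ^ m) * ((‖(1 : 𝔸)‖ + 1) * M ^ m)) :=
          mul_le_mul_of_nonneg_left h3 (by positivity)
      _ = (Cv * (‖(1 : 𝔸)‖ + 1)) * (Z * δ * M) ^ m := h4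
      _ ≤ (Cv * (‖(1 : 𝔸)‖ + 1)) * (2⁻¹ : ℝ) ^ m :=
          mul_le_mul_of_nonneg_left h6 (by positivity)
  obtain ⟨m, hm⟩ := pow_unbounded_of_one_lt (Cv * (‖(1 : 𝔸)‖ + 1)) (y := 2) one_lt_two
  have hyunit : IsUnit (1 - y) := by
    apply aux_unit _ m
    calc ‖y ^ m‖ ≤ (Cv * (‖(1 : 𝔸)‖ + 1)) * (2⁻¹ : ℝ) ^ m := hyn m
      _ < 1 := by
        rw [inv_pow, mul_inv_lt_iff₀ (by positivity), one_mul]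
        exact hm
  have huunit : IsUnit (1 - z • u) := ⟨⟨1 - z • u, g z, (gp z le_rfl).1, (gp z le_rfl).2.1⟩, rfl⟩
  have hfact : 1 - z • (u + v) = (1 - z • u) * (1 - y) := by
    rw [hy, mul_sub, mul_one, mul_smul_comm, ← mul_assoc, (gp z le_rfl).1, one_mul, smul_add]
    abel
  rw [hfact]
  exact huunit.mul hyunit

lemma quasi_add_smul_comm {u v : 𝔸} {lam : ℂ} (hlam : lam ≠ 0)
    (hu : IsQuasinilpotent u) (hv : IsQuasinilpotent v)
    (huv : u * v = lam • (v * u)) : IsQuasinilpotent (u + v) := by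
  rcases le_or_gt ‖lam‖ 1 with h | h
  · exact quasi_add_core h hu hv huv
  · have hvu : v * u = lam⁻¹ • (u * v) := by
      rw [huv, smul_smul, inv_mul_cancel₀ hlam, one_smul]
    have h1 : ‖lam⁻¹‖ ≤ 1 := by
      rw [norm_inv]
      exact inv_le_one_of_one_le₀ h.le
    have := quasi_add_core h1 hv hu hvu
    rwa [add_comm] at this

/-- if `a` is quasinilpotent, `b` has g-Drazin inverse `bd`,
`λ ≠ 0` and `a*b = λ • (b*a*bᵖ)` where `bᵖ = 1 - b*bd`, then
`(a+b)ᵈ = bd + Σ_{n≥0} bd^(n+2) * a * (a+b)^n`. -/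
theorem gDrazin_add_of_quasinilpotent (a b bd : 𝔸) (lam : ℂ) (hlam : lam ≠ 0)
    (ha : IsQuasinilpotent a) (hb : IsGDrazinInverse b bd)
    (hab : a * b = lam • (b * a * (1 - b * bd))) :
    IsGDrazinInverse (a + b) (bd + ∑' n : ℕ, bd ^ (n + 2) * a * (a + b) ^ n) := by
  obtain ⟨hbc0, hinv, hq⟩ := hb
  have hbc : b * bd = bd * b := hbc0
  set bp : 𝔸 := 1 - b * bd with hbp
  have i1 : b * bd * bd = bd := by rw [hbc]; exact hinv
  have i2 : bp * bd = 0 := by rw [hbp, sub_mul, one_mul, i1, sub_self]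
  have i3 : bd * bp = 0 := by rw [hbp, mul_sub, mul_one, ← mul_assoc, hinv, sub_self]
  have i4 : a * b * bd = 0 := by
    rw [hab, smul_mul_assoc, mul_assoc, i2, mul_zero, smul_zero]
  have i5 : a * bp = a := by rw [hbp, mul_sub, mul_one, ← mul_assoc, i4, sub_zero]
  have i6 : a * bd = 0 := by
    conv_lhs => rw [← i5]
    rw [mul_assoc, i2, mul_zero]
  have hp2 : (b * bd) * (b * bd) = b * bd := by
    rw [mul_assoc, ← mul_assoc bd b bd, hinv]
  have i8a : bp * (b * bd) = 0 := by rw [hbp, sub_mul, one_mul, hp2, sub_self]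
  have i7 : bp * b = b * bp := by
    rw [hbp, sub_mul, one_mul, mul_sub, mul_one, mul_assoc, ← hbc]
  have i8 : bp * bp = bp := by
    nth_rewrite 2 [hbp]
    rw [mul_sub, mul_one, i8a, sub_zero]
  set c : 𝔸 := bp * (a + b) with hc
  have i9 : c * bd = 0 := by
    have h1 : (a + b) * bd = b * bd := by rw [add_mul, i6, zero_add]
    rw [hc, mul_assoc, h1, i8a]
  have i10 : bd * c = 0 := by rw [hc, ← mul_assoc, i3, zero_mul]
  have e2 : bp * (b * bp) = b * bp := by
    rw [← mul_assoc, i7, mul_assoc, i8]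
  have i11 : c * bp = c := by
    rw [hc, mul_assoc, add_mul, i5, mul_add, e2, mul_add, ← i7]
  have hacbp : ∀ n : ℕ, a * c ^ n * bp = a * c ^ n := by
    intro n
    cases n with
    | zero => rw [pow_zero, mul_one, i5]
    | succ n => rw [pow_succ, ← mul_assoc, mul_assoc (a * c ^ n) c bp, i11]
  have i12 : ∀ n : ℕ, a * (a + b) ^ n = a * c ^ n := by
    intro n
    induction n with
    | zero => rw [pow_zero, pow_zero]
    | succ n ih =>
      calc a * (a + b) ^ (n + 1) = a * (a + b) ^ n * (a + b) := by
            rw [pow_succ, ← mul_assoc]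
        _ = a * c ^ n * (a + b) := by rw [ih]
        _ = a * c ^ n * bp * (a + b) := by rw [hacbp n]
        _ = a * c ^ (n + 1) := by rw [hc, pow_succ]; noncomm_ring
  have icnbd : ∀ n : ℕ, a * c ^ n * bd = 0 := by
    intro n
    cases n with
    | zero => rw [pow_zero, mul_one, i6]
    | succ n => rw [pow_succ, ← mul_assoc, mul_assoc (a * c ^ n) c bd, i9, mul_zero]
  -- quasinilpotency of the pieces
  have hbbp : IsQuasinilpotent (b * bp) := by
    have e : b - b ^ 2 * bd = b * bp := by
      rw [hbp, mul_sub, mul_one, ← mul_assoc, ← pow_two]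
    rwa [e] at hq
  have ha5n : ∀ n : ℕ, a ^ (n + 1) * bp = a ^ (n + 1) := by
    intro n; rw [pow_succ, mul_assoc, i5]
  have hbpa : IsQuasinilpotent (bp * a) := by
    have hpow : ∀ n : ℕ, (bp * a) ^ (n + 1) = bp * a ^ (n + 1) := by
      intro n
      induction n with
      | zero => rw [pow_one, pow_one]
      | succ n ih =>
        calc (bp * a) ^ (n + 2) = (bp * a) ^ (n + 1) * (bp * a) := by rw [pow_succ]
          _ = bp * a ^ (n + 1) * (bp * a) := by rw [ih]
          _ = bp * (a ^ (n + 1) * bp) * a := by noncomm_ring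
          _ = bp * a ^ (n + 1) * a := by rw [ha5n n]
          _ = bp * a ^ (n + 2) := by rw [pow_succ a (n + 1), ← mul_assoc]
    apply quasi_of_norm_pow_le
    intro ε hε
    obtain ⟨C, hC, hCb⟩ := norm_pow_le_of_quasi a ha ε hε
    refine ⟨(‖bp‖ + 1) * C + ‖(1 : 𝔸)‖ + 1, by positivity, ?_⟩
    intro n
    cases n with
    | zero =>
      rw [pow_zero, pow_zero, mul_one]
      nlinarith [norm_nonneg bp, norm_nonneg (1 : 𝔸)]
    | succ n =>
      rw [hpow n]
      have h1 : ‖bp * a ^ (n + 1)‖ ≤ ‖bp‖ * ‖a ^ (n + 1)‖ := norm_mul_le _ _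
      have h2 : ‖a ^ (n + 1)‖ ≤ C * ε ^ (n + 1) := hCb (n + 1)
      have h3 : (0:ℝ) < ε ^ (n + 1) := pow_pos hε _
      nlinarith [norm_nonneg bp, norm_nonneg (1 : 𝔸), norm_nonneg (a ^ (n + 1))]
  have hcq : IsQuasinilpotent c := by
    have hce2 : c = bp * a + b * bp := by rw [hc, mul_add, i7]
    have hlamc : (bp * a) * (b * bp) = lam • ((b * bp) * (bp * a)) := by
      calc (bp * a) * (b * bp) = bp * (a * b) * bp := by noncomm_ring
        _ = bp * (lam • (b * a * bp)) * bp := by rw [hab]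
        _ = lam • (bp * (b * a * bp) * bp) := by
            rw [mul_smul_comm, smul_mul_assoc]
        _ = lam • (bp * b * (a * bp) * bp) := by noncomm_ring
        _ = lam • (bp * b * a * bp) := by rw [i5, mul_assoc (bp * b) a bp, i5]
        _ = lam • (b * bp * (a * bp)) := by rw [i7, mul_assoc (b * bp) a bp]
        _ = lam • (b * bp * a) := by rw [i5]
        _ = lam • ((b * bp) * (bp * a)) := by
            rw [← mul_assoc, mul_assoc b bp bp, i8]
    rw [hce2]
    exact quasi_add_smul_comm hlam hbpa hbbp hlamc
  -- geometric bound for powers of bd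
  have hbdpow : ∀ m : ℕ, ‖bd ^ m‖ ≤ (‖(1 : 𝔸)‖ + 1) * (‖bd‖ + 1) ^ m := by
    intro m
    induction m with
    | zero => rw [pow_zero, pow_zero, mul_one]; linarith [norm_nonneg (1 : 𝔸)]
    | succ m ih =>
      have h1 : ‖bd ^ (m + 1)‖ ≤ ‖bd‖ * ‖bd ^ m‖ := by
        rw [pow_succ']; exact norm_mul_le _ _
      have h2 : (0:ℝ) ≤ ‖bd‖ := norm_nonneg bd
      have h3 : (0:ℝ) < (‖bd‖ + 1) ^ m := by positivity
      have h4 : (0:ℝ) ≤ ‖bd ^ m‖ := norm_nonneg _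
      calc ‖bd ^ (m + 1)‖ ≤ ‖bd‖ * ‖bd ^ m‖ := h1
        _ ≤ (‖bd‖ + 1) * ((‖(1 : 𝔸)‖ + 1) * (‖bd‖ + 1) ^ m) := by
            nlinarith [norm_nonneg (1 : 𝔸)]
        _ = (‖(1 : 𝔸)‖ + 1) * (‖bd‖ + 1) ^ (m + 1) := by rw [pow_succ]; ring
  obtain ⟨Cc, hCc, hCcb⟩ := norm_pow_le_of_quasi c hcq ((2 * (‖bd‖ + 1))⁻¹) (by positivity)
  have hB0 : (0:ℝ) < ‖bd‖ + 1 := by positivity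
  have hBe : (‖bd‖ + 1) * (2 * (‖bd‖ + 1))⁻¹ = 2⁻¹ := by
    rw [mul_inv_rev, ← mul_assoc, mul_inv_cancel₀ hB0.ne', one_mul]
  have hsum : ∀ j k : ℕ, Summable (fun n : ℕ => bd ^ (n + j) * a * (a + b) ^ (n + k)) := by
    intro j k
    apply Summable.of_norm_bounded (g := fun n => ((‖(1 : 𝔸)‖ + 1) * (‖bd‖ + 1) ^ j * ‖a‖ *
        (Cc * ((2 * (‖bd‖ + 1))⁻¹) ^ k)) * (2⁻¹ : ℝ) ^ n)
      ((summable_geometric_of_lt_one (by norm_num) (by norm_num)).mul_left _)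
    intro n
    have e1 : bd ^ (n + j) * a * (a + b) ^ (n + k) = bd ^ (n + j) * (a * c ^ (n + k)) := by
      rw [mul_assoc, i12]
    have h1 : ‖bd ^ (n + j) * (a * c ^ (n + k))‖ ≤ ‖bd ^ (n + j)‖ * (‖a‖ * ‖c ^ (n + k)‖) :=
      (norm_mul_le _ _).trans (mul_le_mul_of_nonneg_left (norm_mul_le _ _) (norm_nonneg _))
    have h4 : ‖bd ^ (n + j)‖ * (‖a‖ * ‖c ^ (n + k)‖) ≤
        ((‖(1 : 𝔸)‖ + 1) * (‖bd‖ + 1) ^ (n + j)) *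
          (‖a‖ * (Cc * ((2 * (‖bd‖ + 1))⁻¹) ^ (n + k))) := by
      apply mul_le_mul (hbdpow _)
        (mul_le_mul_of_nonneg_left (hCcb _) (norm_nonneg a)) (by positivity) (by positivity)
    have h5 : ((‖(1 : 𝔸)‖ + 1) * (‖bd‖ + 1) ^ (n + j)) *
          (‖a‖ * (Cc * ((2 * (‖bd‖ + 1))⁻¹) ^ (n + k)))
        = ((‖(1 : 𝔸)‖ + 1) * (‖bd‖ + 1) ^ j * ‖a‖ * (Cc * ((2 * (‖bd‖ + 1))⁻¹) ^ k)) *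
          ((‖bd‖ + 1) * (2 * (‖bd‖ + 1))⁻¹) ^ n := by
      rw [pow_add, pow_add, mul_pow]; ring
    rw [e1]
    calc ‖bd ^ (n + j) * (a * c ^ (n + k))‖ ≤ _ := h1
      _ ≤ _ := h4
      _ = _ := h5
      _ = _ := by rw [hBe]
  have hfs : Summable (fun n : ℕ => bd ^ (n + 2) * a * (a + b) ^ n) := by
    have := hsum 2 0; simpa using this
  have hgs : Summable (fun n : ℕ => bd ^ (n + 1) * a * (a + b) ^ n) := by
    have := hsum 1 0; simpa using this
  have hts : Summable (fun n : ℕ => bd ^ (n + 1) * a * (a + b) ^ (n + 1)) := hsum 1 1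
  set S : 𝔸 := ∑' n : ℕ, bd ^ (n + 2) * a * (a + b) ^ n with hS
  set T : 𝔸 := ∑' n : ℕ, bd ^ (n + 1) * a * (a + b) ^ n with hT
  set t : 𝔸 := ∑' n : ℕ, bd ^ (n + 1) * a * (a + b) ^ (n + 1) with ht
  have hpow2 : ∀ n : ℕ, bd ^ (n + 2) = bd * bd ^ (n + 1) := by
    intro n
    rw [show n + 2 = (n + 1) + 1 by omega, pow_succ']
  have hpow1 : ∀ n : ℕ, bd ^ (n + 1) = bd * bd ^ n := fun n => pow_succ' bd n
  have hbdS : ∀ n : ℕ, b * bd ^ (n + 2) = bd ^ (n + 1) := by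
    intro n
    calc b * bd ^ (n + 2) = b * (bd * (bd * bd ^ n)) := by rw [hpow2, hpow1]
      _ = (b * bd * bd) * bd ^ n := by noncomm_ring
      _ = bd * bd ^ n := by rw [i1]
      _ = bd ^ (n + 1) := (hpow1 n).symm
  have hpS : ∀ n : ℕ, (b * bd) * bd ^ (n + 2) = bd ^ (n + 2) := by
    intro n
    calc (b * bd) * bd ^ (n + 2) = (b * bd * bd) * (bd * bd ^ n) := by
          rw [hpow2, hpow1]; noncomm_ring
      _ = bd * (bd * bd ^ n) := by rw [i1]
      _ = bd ^ (n + 2) := by rw [hpow2, hpow1]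
  -- general annihilation on the right by bd
  have hterm : ∀ m n : ℕ, (bd ^ m * a * (a + b) ^ n) * bd = 0 := by
    intro m n
    calc (bd ^ m * a * (a + b) ^ n) * bd = bd ^ m * (a * (a + b) ^ n * bd) := by noncomm_ring
      _ = bd ^ m * (a * c ^ n * bd) := by rw [i12 n]
      _ = 0 := by rw [icnbd n, mul_zero]
  have hkillS : ∀ x : 𝔸, x * bd = 0 → x * S = 0 := by
    intro x hx
    rw [hS, ← hfs.tsum_mul_left]
    have h0 : ∀ n : ℕ, x * (bd ^ (n + 2) * a * (a + b) ^ n) = 0 := by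
      intro n
      calc x * (bd ^ (n + 2) * a * (a + b) ^ n)
          = (x * bd) * (bd ^ (n + 1) * a * (a + b) ^ n) := by rw [hpow2 n]; noncomm_ring
        _ = 0 := by rw [hx, zero_mul]
    rw [tsum_congr h0, tsum_zero]
  have hkillt : ∀ x : 𝔸, x * bd = 0 → x * t = 0 := by
    intro x hx
    rw [ht, ← hts.tsum_mul_left]
    have h0 : ∀ n : ℕ, x * (bd ^ (n + 1) * a * (a + b) ^ (n + 1)) = 0 := by
      intro n
      calc x * (bd ^ (n + 1) * a * (a + b) ^ (n + 1))
          = (x * bd) * (bd ^ n * a * (a + b) ^ (n + 1)) := by rw [hpow1 n]; noncomm_ring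
        _ = 0 := by rw [hx, zero_mul]
    rw [tsum_congr h0, tsum_zero]
  -- a kills x = bd + S on the left
  have haS : a * S = 0 := by
    rw [hS, ← hfs.tsum_mul_left]
    have h0 : ∀ n : ℕ, a * (bd ^ (n + 2) * a * (a + b) ^ n) = 0 := by
      intro n
      calc a * (bd ^ (n + 2) * a * (a + b) ^ n)
          = (a * bd) * (bd ^ (n + 1) * a * (a + b) ^ n) := by rw [hpow2 n]; noncomm_ring
        _ = 0 := by rw [i6, zero_mul]
    rw [tsum_congr h0, tsum_zero]
  have hax : a * (bd + S) = 0 := by rw [mul_add, i6, haS, add_zero]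
  have hbS : b * S = T := by
    rw [hS, hT, ← hfs.tsum_mul_left]
    apply tsum_congr; intro n
    calc b * (bd ^ (n + 2) * a * (a + b) ^ n)
        = (b * bd ^ (n + 2)) * a * (a + b) ^ n := by noncomm_ring
      _ = bd ^ (n + 1) * a * (a + b) ^ n := by rw [hbdS n]
  have hABx : (a + b) * (bd + S) = b * bd + T := by
    rw [add_mul, hax, zero_add, mul_add, hbS]
  have hfAB : S * (a + b) = ∑' n : ℕ, bd ^ (n + 2) * a * (a + b) ^ (n + 1) := by
    rw [hS, ← hfs.tsum_mul_right]
    apply tsum_congr; intro n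
    rw [mul_assoc, ← pow_succ]
  have hTsplit : T = bd * a + ∑' n : ℕ, bd ^ (n + 2) * a * (a + b) ^ (n + 1) := by
    rw [hT, Summable.tsum_eq_zero_add hgs]
    congr 1
    · simp
  have hxAB : (bd + S) * (a + b) = b * bd + T := by
    rw [add_mul, hfAB, mul_add, hTsplit, ← hbc]
    abel
  have hcommute : Commute (a + b) (bd + S) := hABx.trans hxAB.symm
  -- condition 2
  have hTbd : T * bd = 0 := by
    rw [hT, ← hgs.tsum_mul_right]
    have h0 : ∀ n : ℕ, (bd ^ (n + 1) * a * (a + b) ^ n) * bd = 0 := fun n => hterm (n + 1) n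
    rw [tsum_congr h0, tsum_zero]
  have htbd : t * bd = 0 := by
    rw [ht, ← hts.tsum_mul_right]
    have h0 : ∀ n : ℕ, (bd ^ (n + 1) * a * (a + b) ^ (n + 1)) * bd = 0 :=
      fun n => hterm (n + 1) (n + 1)
    rw [tsum_congr h0, tsum_zero]
  have hpbdS : (b * bd) * S = S := by
    rw [hS, ← hfs.tsum_mul_left]
    apply tsum_congr; intro n
    calc (b * bd) * (bd ^ (n + 2) * a * (a + b) ^ n)
        = ((b * bd) * bd ^ (n + 2)) * a * (a + b) ^ n := by noncomm_ring
      _ = bd ^ (n + 2) * a * (a + b) ^ n := by rw [hpS n]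
  have hcond2 : (bd + S) * (a + b) * (bd + S) = bd + S := by
    rw [hxAB, add_mul, mul_add, mul_add, i1, hTbd, hpbdS, hkillS T hTbd]
    abel
  -- condition 3
  have hABT : (a + b) * T = (b * bd) * a + t := by
    rw [hT, ← hgs.tsum_mul_left]
    have hterm2 : ∀ n : ℕ, (a + b) * (bd ^ (n + 1) * a * (a + b) ^ n)
        = b * (bd ^ (n + 1) * a * (a + b) ^ n) := by
      intro n
      rw [add_mul]
      have h0 : a * (bd ^ (n + 1) * a * (a + b) ^ n) = 0 := by
        calc a * (bd ^ (n + 1) * a * (a + b) ^ n)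
            = (a * bd) * (bd ^ n * a * (a + b) ^ n) := by rw [hpow1 n]; noncomm_ring
          _ = 0 := by rw [i6, zero_mul]
      rw [h0, zero_add]
    rw [tsum_congr hterm2, Summable.tsum_eq_zero_add (hgs.mul_left b)]
    congr 1
    · rw [pow_one, pow_zero, mul_one, ← mul_assoc]
    · rw [ht]
      apply tsum_congr; intro n
      calc b * (bd ^ (n + 1 + 1) * a * (a + b) ^ (n + 1))
          = (b * bd ^ (n + 2)) * a * (a + b) ^ (n + 1) := by
            rw [show n + 1 + 1 = n + 2 by omega, ← mul_assoc, ← mul_assoc]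
        _ = bd ^ (n + 1) * a * (a + b) ^ (n + 1) := by rw [hbdS n]
  have hq3expr : (a + b) - (a + b) ^ 2 * (bd + S) = c - t := by
    have h1 : (a + b) ^ 2 * (bd + S) = (a + b) * ((a + b) * (bd + S)) := by
      rw [pow_two, mul_assoc]
    rw [h1, hABx, mul_add, hABT]
    have h2 : (a + b) * (b * bd) = (b * bd) * b := by
      rw [add_mul, ← mul_assoc, i4, zero_add]
      exact ((Commute.refl b).mul_right (hbc : Commute b bd)).eq
    rw [h2]
    have hce : c = a + b - (b * bd) * a - (b * bd) * b := by
      rw [hc, hbp]; noncomm_ring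
    rw [hce]; abel
  have hct : c * t = 0 := by
    rw [ht, ← hts.tsum_mul_left]
    have h0 : ∀ n : ℕ, c * (bd ^ (n + 1) * a * (a + b) ^ (n + 1)) = 0 := by
      intro n
      calc c * (bd ^ (n + 1) * a * (a + b) ^ (n + 1))
          = (c * bd) * (bd ^ n * a * (a + b) ^ (n + 1)) := by rw [hpow1 n]; noncomm_ring
        _ = 0 := by rw [i9, zero_mul]
    rw [tsum_congr h0, tsum_zero]
  have htt : t * t = 0 := hkillt t htbd
  have hc1t : ∀ n : ℕ, c ^ (n + 1) * t = 0 := by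
    intro n; rw [pow_succ, mul_assoc, hct, mul_zero]
  have htct : ∀ n : ℕ, t * c ^ n * t = 0 := by
    intro n
    cases n with
    | zero => rw [pow_zero, mul_one]; exact htt
    | succ n => rw [mul_assoc, hc1t n, mul_zero]
  have hqpow : ∀ n : ℕ, (c - t) ^ (n + 1) = c ^ (n + 1) - t * c ^ n := by
    intro n
    induction n with
    | zero => rw [pow_one, pow_one, pow_zero, mul_one]
    | succ n ih =>
      calc (c - t) ^ (n + 2) = (c - t) ^ (n + 1) * (c - t) := by rw [pow_succ]
        _ = (c ^ (n + 1) - t * c ^ n) * (c - t) := by rw [ih]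
        _ = c ^ (n + 1) * c - c ^ (n + 1) * t - (t * c ^ n * c - t * c ^ n * t) := by
            noncomm_ring
        _ = c ^ (n + 2) - t * c ^ (n + 1) := by
            rw [hc1t n, htct n, sub_zero, sub_zero, ← pow_succ, mul_assoc, ← pow_succ]
  have hq3 : IsQuasinilpotent ((a + b) - (a + b) ^ 2 * (bd + S)) := by
    rw [hq3expr]
    apply quasi_of_norm_pow_le
    intro d hd
    obtain ⟨C2, hC2, hC2b⟩ := norm_pow_le_of_quasi c hcq d hd
    refine ⟨C2 + C2 * ‖t‖ / d + ‖(1 : 𝔸)‖ + 1, by positivity, ?_⟩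
    intro n
    cases n with
    | zero =>
      rw [pow_zero, pow_zero, mul_one]
      have : (0:ℝ) ≤ C2 * ‖t‖ / d := by positivity
      nlinarith [norm_nonneg (1 : 𝔸)]
    | succ n =>
      rw [hqpow n]
      have h1 : ‖c ^ (n + 1) - t * c ^ n‖ ≤ ‖c ^ (n + 1)‖ + ‖t‖ * ‖c ^ n‖ :=
        (norm_sub_le _ _).trans (add_le_add le_rfl (norm_mul_le _ _))
      have h2 := hC2b (n + 1)
      have h3 : ‖t‖ * ‖c ^ n‖ ≤ ‖t‖ * (C2 * d ^ n) :=
        mul_le_mul_of_nonneg_left (hC2b n) (norm_nonneg t)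
      have h5 : d ^ (n + 1) = d * d ^ n := pow_succ' d n
      have h6 : (C2 * ‖t‖ / d) * d ^ (n + 1) = ‖t‖ * (C2 * d ^ n) := by
        rw [h5]; field_simp
      have h7 : (0:ℝ) ≤ (‖(1 : 𝔸)‖ + 1) * d ^ (n + 1) := by positivity
      calc ‖c ^ (n + 1) - t * c ^ n‖ ≤ ‖c ^ (n + 1)‖ + ‖t‖ * ‖c ^ n‖ := h1
        _ ≤ C2 * d ^ (n + 1) + ‖t‖ * (C2 * d ^ n) := add_le_add h2 h3
        _ = C2 * d ^ (n + 1) + (C2 * ‖t‖ / d) * d ^ (n + 1) := by rw [h6]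
        _ ≤ (C2 + C2 * ‖t‖ / d + ‖(1 : 𝔸)‖ + 1) * d ^ (n + 1) := by
            have h8 : (C2 + C2 * ‖t‖ / d + ‖(1 : 𝔸)‖ + 1) * d ^ (n + 1)
                = C2 * d ^ (n + 1) + (C2 * ‖t‖ / d) * d ^ (n + 1)
                  + (‖(1 : 𝔸)‖ + 1) * d ^ (n + 1) := by ring
            linarith
  exact ⟨hcommute, hcond2, hq3⟩
end

section
/- Let A be a complex unital Banach algebra, a, b ∈ A both having generalized Drazin inverses, and λ ≠ 0 a complex number. If ab = λ a^π b a b^π (where a^π = 1 − a a^d, b^π = 1 − b b^d are the spectral idempotents), then a + b has a generalized Drazin inverse. -/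
variable {𝔸 : Type*} [NormedRing 𝔸] [NormedAlgebra ℂ 𝔸] [CompleteSpace 𝔸]

open Filter Topology

set_option linter.unusedSectionVars false

theorem qn_iff_norm (x : 𝔸) :
    IsQuasinilpotent x ↔ ∀ ε : ℝ, 0 < ε → ∀ᶠ n : ℕ in atTop, ‖x ^ n‖ ≤ ε ^ n := by
  constructor
  · intro h ε hε
    have T := spectrum.pow_nnnorm_pow_one_div_tendsto_nhds_spectralRadius x
    rw [h] at T
    have hε' : (0 : ENNReal) < ENNReal.ofReal ε := by simpa using hε
    have h1 : ∀ᶠ n : ℕ in atTop, (‖x ^ n‖₊ : ENNReal) ^ (1 / n : ℝ) < ENNReal.ofReal ε :=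
      T.eventually_lt_const hε'
    filter_upwards [h1, eventually_ge_atTop 1] with n hn hn1
    have hn0 : (n : ℝ) ≠ 0 := by positivity
    have hc : (‖x ^ n‖₊ : ENNReal) = ((‖x ^ n‖₊ : ENNReal) ^ (1 / n : ℝ)) ^ (n : ℝ) := by
      rw [← ENNReal.rpow_mul, one_div, inv_mul_cancel₀ hn0, ENNReal.rpow_one]
    have h2 : (‖x ^ n‖₊ : ENNReal) ≤ ENNReal.ofReal (ε ^ n) := by
      rw [hc, ENNReal.ofReal_pow hε.le, ← ENNReal.rpow_natCast (ENNReal.ofReal ε) n]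
      exact ENNReal.rpow_le_rpow hn.le (by positivity)
    rw [← ENNReal.ofReal_coe_nnreal, coe_nnnorm, ENNReal.ofReal_le_ofReal_iff (by positivity)] at h2
    exact h2
  · intro h
    have T := spectrum.pow_nnnorm_pow_one_div_tendsto_nhds_spectralRadius x
    have key : ∀ ε : ℝ, 0 < ε → spectralRadius ℂ x ≤ ENNReal.ofReal ε := by
      intro ε hε
      refine le_of_tendsto T ?_
      filter_upwards [h ε hε, eventually_ge_atTop 1] with n hn hn1
      have hn0 : (n : ℝ) ≠ 0 := by positivity
      have h2 : (‖x ^ n‖₊ : ENNReal) ≤ ENNReal.ofReal (ε ^ n) := by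
        rw [← ENNReal.ofReal_coe_nnreal, coe_nnnorm]
        exact ENNReal.ofReal_le_ofReal hn
      calc (‖x ^ n‖₊ : ENNReal) ^ (1 / n : ℝ)
          ≤ (ENNReal.ofReal (ε ^ n)) ^ (1 / n : ℝ) :=
            ENNReal.rpow_le_rpow h2 (by positivity)
        _ = ENNReal.ofReal ε := by
            rw [ENNReal.ofReal_pow hε.le, ← ENNReal.rpow_natCast _ n, ← ENNReal.rpow_mul]
            rw [mul_one_div, div_self hn0, ENNReal.rpow_one]
    have h0 : spectralRadius ℂ x ≤ 0 := by
      refine ENNReal.le_of_forall_pos_le_add fun ε hε _ => ?_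
      have := key ε hε
      simpa [ENNReal.ofReal_coe_nnreal] using this
    exact le_antisymm h0 zero_le

theorem fix_zero (c d z : 𝔸) (lam : ℂ)
    (hiter : z = lam⁻¹ • (c * z * d))
    (hbound : ∃ n : ℕ, 1 ≤ n ∧ ‖lam⁻¹‖ ^ n * (‖c ^ n‖ * ‖d ^ n‖) ≤ 1 / 2) : z = 0 := by
  have key : ∀ n : ℕ, z = (lam⁻¹) ^ n • (c ^ n * z * d ^ n) := by
    intro n
    induction n with
    | zero => simp
    | succ n ih =>
      calc z = lam⁻¹ • (c * z * d) := hiter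
        _ = lam⁻¹ • (c * ((lam⁻¹) ^ n • (c ^ n * z * d ^ n)) * d) := by rw [← ih]
        _ = (lam⁻¹) ^ (n + 1) • (c ^ (n + 1) * z * d ^ (n + 1)) := by
            rw [mul_smul_comm, smul_mul_assoc, smul_smul, ← pow_succ']
            congr 1
            rw [pow_succ' c n, pow_succ d n]
            noncomm_ring
  obtain ⟨n, hn1, hn⟩ := hbound
  have hz := key n
  have hnorm : ‖z‖ ≤ ‖lam⁻¹‖ ^ n * (‖c ^ n‖ * ‖d ^ n‖) * ‖z‖ := by
    calc ‖z‖ = ‖(lam⁻¹) ^ n • (c ^ n * z * d ^ n)‖ := by rw [← hz]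
      _ = ‖lam⁻¹‖ ^ n * ‖c ^ n * z * d ^ n‖ := by rw [norm_smul, norm_pow]
      _ ≤ ‖lam⁻¹‖ ^ n * (‖c ^ n‖ * ‖z‖ * ‖d ^ n‖) := by
          gcongr
          exact (norm_mul_le _ _).trans (by gcongr <;> exact norm_mul_le _ _)
      _ = ‖lam⁻¹‖ ^ n * (‖c ^ n‖ * ‖d ^ n‖) * ‖z‖ := by ring
  have h2 : ‖z‖ ≤ 1 / 2 * ‖z‖ :=
    hnorm.trans (by gcongr <;> first | exact hn | exact norm_nonneg _)
  have : ‖z‖ = 0 := by nlinarith [norm_nonneg z]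
  exact norm_eq_zero.mp this

theorem fix_zero_left (c d z : 𝔸) (lam : ℂ) (hc : IsQuasinilpotent c)
    (hiter : z = lam⁻¹ • (c * z * d)) : z = 0 := by
  refine fix_zero c d z lam hiter ?_
  set K : ℝ := (‖lam⁻¹‖ + 1) * (‖d‖ + 1) with hK
  have hKpos : 0 < K := by positivity
  have hev := (qn_iff_norm c).mp hc (1 / (2 * K)) (by positivity)
  obtain ⟨n, hcn, hn1⟩ := ((hev.and (eventually_ge_atTop 1)).exists)
  refine ⟨n, hn1, ?_⟩
  have hKK : K * (1 / (2 * K)) = 1 / 2 := by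
    rw [mul_one_div, mul_comm 2 K, ← div_div, div_self hKpos.ne']
  calc ‖lam⁻¹‖ ^ n * (‖c ^ n‖ * ‖d ^ n‖)
      ≤ ‖lam⁻¹‖ ^ n * ((1 / (2 * K)) ^ n * ‖d‖ ^ n) := by
        gcongr <;> first | exact hcn | exact norm_pow_le' d (by omega)
    _ = (‖lam⁻¹‖ * ‖d‖ * (1 / (2 * K))) ^ n := by ring
    _ ≤ (K * (1 / (2 * K))) ^ n := by
        apply pow_le_pow_left₀ (by positivity)
        have : (0:ℝ) < 1 / (2 * K) := by positivity
        nlinarith [norm_nonneg (lam⁻¹ : ℂ), norm_nonneg d]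
    _ = (1 / 2) ^ n := by rw [hKK]
    _ ≤ (1 / 2) ^ 1 := pow_le_pow_of_le_one (by norm_num) (by norm_num) hn1
    _ = 1 / 2 := pow_one _

theorem fix_zero_right (c d z : 𝔸) (lam : ℂ) (hd : IsQuasinilpotent d)
    (hiter : z = lam⁻¹ • (c * z * d)) : z = 0 := by
  refine fix_zero c d z lam hiter ?_
  set K : ℝ := (‖lam⁻¹‖ + 1) * (‖c‖ + 1) with hK
  have hKpos : 0 < K := by positivity
  have hev := (qn_iff_norm d).mp hd (1 / (2 * K)) (by positivity)
  obtain ⟨n, hdn, hn1⟩ := ((hev.and (eventually_ge_atTop 1)).exists)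
  refine ⟨n, hn1, ?_⟩
  have hKK : K * (1 / (2 * K)) = 1 / 2 := by
    rw [mul_one_div, mul_comm 2 K, ← div_div, div_self hKpos.ne']
  calc ‖lam⁻¹‖ ^ n * (‖c ^ n‖ * ‖d ^ n‖)
      ≤ ‖lam⁻¹‖ ^ n * (‖c‖ ^ n * (1 / (2 * K)) ^ n) := by
        gcongr <;> first | exact hdn | exact norm_pow_le' c (by omega)
    _ = (‖lam⁻¹‖ * ‖c‖ * (1 / (2 * K))) ^ n := by ring
    _ ≤ (K * (1 / (2 * K))) ^ n := by
        apply pow_le_pow_left₀ (by positivity)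
        have : (0:ℝ) < 1 / (2 * K) := by positivity
        nlinarith [norm_nonneg (lam⁻¹ : ℂ), norm_nonneg c]
    _ = (1 / 2) ^ n := by rw [hKK]
    _ ≤ (1 / 2) ^ 1 := pow_le_pow_of_le_one (by norm_num) (by norm_num) hn1
    _ = 1 / 2 := pow_one _

theorem isUnit_one_sub_of_qn {x : 𝔸} (h : IsQuasinilpotent x) : IsUnit (1 - x) := by
  by_contra hc
  have h1 : (1 : ℂ) ∈ spectrum ℂ x := by
    rw [spectrum.mem_iff]
    simpa using hc
  have h2 : (‖(1 : ℂ)‖₊ : ENNReal) ≤ spectralRadius ℂ x :=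
    le_iSup₂ (f := fun k (_ : k ∈ spectrum ℂ x) => (‖k‖₊ : ENNReal)) (1 : ℂ) h1
  rw [h] at h2
  simp at h2

set_option maxHeartbeats 2000000 in
theorem unit_one_sub_add_aux (x y : 𝔸) (lam : ℂ) (hl : ‖lam‖ ≤ 1)
    (hxy : x * y = lam • (y * x)) (hx : IsQuasinilpotent x) (hy : IsQuasinilpotent y) :
    IsUnit (1 - (x + y)) := by
  have hS : Summable (fun n : ℕ => ‖x ^ n‖) := by
    refine Summable.of_norm_bounded_eventually (g := fun n : ℕ => (1/2 : ℝ) ^ n)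
      summable_geometric_two ?_
    rw [Nat.cofinite_eq_atTop]
    filter_upwards [(qn_iff_norm x).mp hx (1/2) (by norm_num)] with n hn
    simpa [abs_of_nonneg (norm_nonneg _)] using hn
  set M : ℝ := ∑' n : ℕ, ‖x ^ n‖ with hM
  clear_value M
  have hMn : ∀ n : ℕ, ‖x ^ n‖ ≤ M := fun n =>
    (Summable.le_tsum hS n (fun m _ => norm_nonneg _)).trans_eq hM.symm
  have hM0 : 0 ≤ M := hM ▸ tsum_nonneg (fun n => norm_nonneg _)
  have hb : ∀ k n : ℕ, ‖lam ^ (k * n) • x ^ n‖ ≤ ‖x ^ n‖ := by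
    intro k n
    rw [norm_smul, norm_pow]
    calc ‖lam‖ ^ (k * n) * ‖x ^ n‖ ≤ 1 * ‖x ^ n‖ := by
          gcongr; exact pow_le_one₀ (norm_nonneg _) hl
      _ = ‖x ^ n‖ := one_mul _
  have hsum : ∀ k : ℕ, Summable (fun n : ℕ => lam ^ (k * n) • x ^ n) :=
    fun k => Summable.of_norm_bounded hS (hb k)
  have hsum' : ∀ k : ℕ, Summable (fun n : ℕ => lam ^ (k * n) • x ^ (n + 1)) := by
    intro k
    refine Summable.of_norm_bounded (g := fun n => ‖x ^ (n + 1)‖)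
      (((summable_nat_add_iff 1).mpr hS)) fun n => ?_
    rw [norm_smul, norm_pow]
    calc ‖lam‖ ^ (k * n) * ‖x ^ (n+1)‖ ≤ 1 * ‖x ^ (n+1)‖ := by
          gcongr; exact pow_le_one₀ (norm_nonneg _) hl
      _ = ‖x ^ (n+1)‖ := one_mul _
  set T : ℕ → 𝔸 := fun k => ∑' n : ℕ, lam ^ (k * n) • x ^ n with hT
  clear_value T
  have hTnorm : ∀ k, ‖T k‖ ≤ M := by
    intro k
    rw [hT, hM]
    refine (norm_tsum_le_tsum_norm (Summable.of_nonneg_of_le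
      (fun n => norm_nonneg _) (hb k) hS)).trans ?_
    exact Summable.tsum_le_tsum (hb k) (Summable.of_nonneg_of_le
      (fun n => norm_nonneg _) (hb k) hS) hS
  have hTone : ∀ k : ℕ, (1 - lam ^ k • x) * T k = 1 := by
    intro k
    have e1 : x * T k = ∑' n : ℕ, lam ^ (k * n) • x ^ (n + 1) := by
      rw [hT, ← Summable.tsum_mul_left x (hsum k)]
      exact tsum_congr fun n => by rw [mul_smul_comm, ← pow_succ']
    have e2 : (lam ^ k • x) * T k = ∑' n : ℕ, lam ^ (k * (n + 1)) • x ^ (n + 1) := by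
      rw [smul_mul_assoc, e1, ← Summable.tsum_const_smul (lam ^ k) (hsum' k)]
      refine tsum_congr fun n => ?_
      rw [smul_smul, ← pow_add]
      congr 2
      ring
    have e3 : T k = lam ^ (k * 0) • x ^ 0 + ∑' n : ℕ, lam ^ (k * (n + 1)) • x ^ (n + 1) := by
      rw [hT]
      exact Summable.tsum_eq_zero_add (hsum k)
    rw [sub_mul, one_mul, e2, e3]
    simp
  have hxny : ∀ n : ℕ, x ^ n * y = lam ^ n • (y * x ^ n) := by
    intro n
    induction n with
    | zero => simp
    | succ n ih =>
      calc x ^ (n+1) * y = x * (x ^ n * y) := by rw [pow_succ']; noncomm_ring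
        _ = x * (lam ^ n • (y * x ^ n)) := by rw [ih]
        _ = lam ^ n • ((x * y) * x ^ n) := by rw [mul_smul_comm]; noncomm_ring
        _ = lam ^ n • ((lam • (y * x)) * x ^ n) := by rw [hxy]
        _ = lam ^ (n+1) • (y * x ^ (n+1)) := by
            rw [smul_mul_assoc, smul_smul, ← pow_succ, pow_succ' x]
            congr 1
            noncomm_ring
  have hTy : ∀ k : ℕ, T k * y = y * T (k + 1) := by
    intro k
    calc T k * y = ∑' n : ℕ, (lam ^ (k * n) • x ^ n) * y := by
          rw [hT]
          exact (Summable.tsum_mul_right y (hsum k)).symm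
      _ = ∑' n : ℕ, y * (lam ^ ((k+1) * n) • x ^ n) := by
          refine tsum_congr fun n => ?_
          rw [smul_mul_assoc, hxny n, smul_smul, ← pow_add, mul_smul_comm]
          congr 2
          ring
      _ = y * T (k + 1) := by
          rw [hT]
          exact Summable.tsum_mul_left y (hsum (k+1))
  have hTyn : ∀ n k : ℕ, T k * y ^ n = y ^ n * T (k + n) := by
    intro n
    induction n with
    | zero => simp
    | succ n ih =>
      intro k
      calc T k * y ^ (n+1) = (T k * y ^ n) * y := by rw [pow_succ]; noncomm_ring
        _ = y ^ n * (T (k + n) * y) := by rw [ih k]; noncomm_ring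
        _ = y ^ n * (y * T (k + n + 1)) := by rw [hTy]
        _ = y ^ (n+1) * T (k + (n+1)) := by
            rw [pow_succ]
            noncomm_ring
  -- powers of z = y * T 1 factor through powers of y
  set C : ℝ := max M 1 with hC
  clear_value C
  have hC1 : (1:ℝ) ≤ C := hC ▸ le_max_right M 1
  have hCM : M ≤ C := hC ▸ le_max_left M 1
  have hC0 : (0:ℝ) < C := lt_of_lt_of_le one_pos hC1
  have claim : ∀ n k : ℕ, ∃ R : 𝔸, (y * T k) ^ n = y ^ n * R ∧
      ‖R‖ ≤ ‖(1:𝔸)‖ * C ^ n := by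
    intro n
    induction n with
    | zero =>
      exact fun k => ⟨1, by rw [pow_zero, pow_zero, one_mul], by rw [pow_zero, mul_one]⟩
    | succ n ih =>
      intro k
      obtain ⟨R, hR1, hR2⟩ := ih k
      refine ⟨T (k + n) * R, ?_, ?_⟩
      · calc (y * T k) ^ (n+1) = (y * T k) * (y ^ n * R) := by rw [pow_succ', hR1]
          _ = y * ((T k * y ^ n) * R) := by noncomm_ring
          _ = y * ((y ^ n * T (k + n)) * R) := by rw [hTyn]
          _ = y ^ (n+1) * (T (k + n) * R) := by rw [pow_succ']; noncomm_ring
      · calc ‖T (k + n) * R‖ ≤ ‖T (k + n)‖ * ‖R‖ := norm_mul_le _ _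
          _ ≤ C * (‖(1:𝔸)‖ * C ^ n) := by
              refine mul_le_mul ((hTnorm _).trans hCM) hR2 (norm_nonneg _) hC0.le
          _ = ‖(1:𝔸)‖ * C ^ (n+1) := by ring
  have hzqn : IsQuasinilpotent (y * T 1) := by
    rw [qn_iff_norm]
    intro ε hε
    have h2 : Tendsto (fun n : ℕ => (2:ℝ) ^ n) atTop atTop :=
      tendsto_pow_atTop_atTop_of_one_lt (by norm_num)
    filter_upwards [(qn_iff_norm y).mp hy (ε / (2 * C)) (by positivity),
      h2.eventually_ge_atTop ‖(1:𝔸)‖] with n hyn h1n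
    obtain ⟨R, hR1, hR2⟩ := claim n 1
    calc ‖(y * T 1) ^ n‖ = ‖y ^ n * R‖ := by rw [hR1]
      _ ≤ ‖y ^ n‖ * ‖R‖ := norm_mul_le _ _
      _ ≤ (ε / (2 * C)) ^ n * (2 ^ n * C ^ n) := by
          refine mul_le_mul hyn (hR2.trans ?_) (norm_nonneg _) (by positivity)
          gcongr
      _ = ε ^ n := by
          rw [← mul_pow, ← mul_pow]
          congr 1
          field_simp
  -- the factorization 1 - (x + y) = (1 - x) * (1 - y * T 1)
  have hyt : y * T 1 - x * (y * T 1) = y := by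
    have h1 : x * (y * T 1) = y * (lam • (x * T 1)) := by
      rw [← mul_assoc, hxy, smul_mul_assoc, mul_assoc, mul_smul_comm]
    have h2 : (1 - lam ^ 1 • x) * T 1 = 1 := hTone 1
    calc y * T 1 - x * (y * T 1) = y * (T 1 - lam • (x * T 1)) := by
          rw [h1, mul_sub]
      _ = y * ((1 - lam ^ 1 • x) * T 1) := by
          rw [pow_one, sub_mul, one_mul, smul_mul_assoc]
      _ = y := by rw [h2, mul_one]
  have hfact : (1 - x) * (1 - y * T 1) = 1 - (x + y) := by
    have expand : (1 - x) * (1 - y * T 1) = 1 - x - (y * T 1 - x * (y * T 1)) := by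
      noncomm_ring
    rw [expand, hyt]
    abel
  rw [← hfact]
  exact (isUnit_one_sub_of_qn hx).mul (isUnit_one_sub_of_qn hzqn)

theorem IsQuasinilpotent.smul' {x : 𝔸} (h : IsQuasinilpotent x) (c : ℂ) :
    IsQuasinilpotent (c • x) := by
  rw [qn_iff_norm] at h ⊢
  intro ε hε
  have hc : (0:ℝ) < ‖c‖ + 1 := by positivity
  filter_upwards [h (ε / (‖c‖ + 1)) (by positivity)] with n hn
  rw [smul_pow, norm_smul, norm_pow]
  calc ‖c‖ ^ n * ‖x ^ n‖ ≤ (‖c‖ + 1) ^ n * (ε / (‖c‖ + 1)) ^ n := by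
        gcongr; · linarith
    _ = ε ^ n := by rw [← mul_pow]; congr 1; field_simp

theorem qn_add (x y : 𝔸) (lam : ℂ) (hlam : lam ≠ 0)
    (hxy : x * y = lam • (y * x)) (hx : IsQuasinilpotent x) (hy : IsQuasinilpotent y) :
    IsQuasinilpotent (x + y) := by
  have unit_all : ∀ (x y : 𝔸) (lam : ℂ), lam ≠ 0 → x * y = lam • (y * x) →
      IsQuasinilpotent x → IsQuasinilpotent y → IsUnit (1 - (x + y)) := by
    intro x y lam hlam hxy hx hy
    rcases le_or_gt ‖lam‖ 1 with h | h
    · exact unit_one_sub_add_aux x y lam h hxy hx hy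
    · have hyx : y * x = lam⁻¹ • (x * y) := by
        rw [hxy, smul_smul, inv_mul_cancel₀ hlam, one_smul]
      have h1 : ‖lam⁻¹‖ ≤ 1 := by
        rw [norm_inv]
        exact inv_le_one_of_one_le₀ h.le
      have := unit_one_sub_add_aux y x lam⁻¹ h1 hyx hy hx
      rwa [add_comm] at this
  have hspec : ∀ μ : ℂ, μ ∈ spectrum ℂ (x + y) → μ = 0 := by
    intro μ hμ
    by_contra hμ0
    rw [spectrum.mem_iff] at hμ
    apply hμ
    have l1 : (μ⁻¹ • x) * (μ⁻¹ • y) = (μ⁻¹ * μ⁻¹ * lam) • (y * x) := by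
      rw [smul_mul_assoc, mul_smul_comm, hxy, smul_smul, smul_smul]
    have l2 : lam • ((μ⁻¹ • y) * (μ⁻¹ • x)) = (lam * μ⁻¹ * μ⁻¹) • (y * x) := by
      rw [smul_mul_assoc, mul_smul_comm, smul_smul, smul_smul, mul_assoc]
    have hxys : (μ⁻¹ • x) * (μ⁻¹ • y) = lam • ((μ⁻¹ • y) * (μ⁻¹ • x)) := by
      rw [l1, l2]
      congr 1
      ring
    have hunit := unit_all (μ⁻¹ • x) (μ⁻¹ • y) lam hlam hxys (hx.smul' μ⁻¹) (hy.smul' μ⁻¹)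
    have heq : algebraMap ℂ 𝔸 μ - (x + y) = μ • (1 - (μ⁻¹ • x + μ⁻¹ • y)) := by
      rw [smul_sub, smul_add, smul_smul, smul_smul, mul_inv_cancel₀ hμ0, one_smul, one_smul,
        Algebra.algebraMap_eq_smul_one]
    rw [heq, show μ • (1 - (μ⁻¹ • x + μ⁻¹ • y)) =
      (algebraMap ℂ 𝔸 μ) * (1 - (μ⁻¹ • x + μ⁻¹ • y)) from Algebra.smul_def μ _]
    exact (IsUnit.map (algebraMap ℂ 𝔸) (isUnit_iff_ne_zero.mpr hμ0)).mul hunit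
  have hle : spectralRadius ℂ (x + y) ≤ 0 := by
    apply iSup₂_le
    intro μ hμ
    rw [hspec μ hμ]
    simp
  exact le_antisymm hle zero_le

/-- if `a, b` have g-Drazin inverses `ad, bd`, `λ ≠ 0` and
`a*b = λ • (aᵖ*b*a*bᵖ)` (spectral idempotents `aᵖ = 1 - a*ad`, `bᵖ = 1 - b*bd`),
then `a + b` has a g-Drazin inverse. -/
theorem gDrazin_add_exists (a b ad bd : 𝔸) (lam : ℂ) (hlam : lam ≠ 0)
    (ha : IsGDrazinInverse a ad) (hb : IsGDrazinInverse b bd)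
    (hab : a * b = lam • ((1 - a * ad) * b * a * (1 - b * bd))) :
    ∃ m : 𝔸, IsGDrazinInverse (a + b) m := by
  obtain ⟨hca', h1a, hqa⟩ := ha
  obtain ⟨hcb', h1b, hqb⟩ := hb
  have hca : a * ad = ad * a := hca'.eq
  have hcb : b * bd = bd * b := hcb'.eq
  have adp : ad * (a * ad) = ad := by rw [← mul_assoc]; exact h1a
  have pad : (a * ad) * ad = ad := by rw [hca]; exact h1a
  have bdq : bd * (b * bd) = bd := by rw [← mul_assoc]; exact h1b
  have qbd : (b * bd) * bd = bd := by rw [hcb]; exact h1b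
  have ZA : ad * (1 - a * ad) = 0 := by rw [mul_sub, mul_one, adp, sub_self]
  have ZB : (1 - b * bd) * bd = 0 := by rw [sub_mul, one_mul, qbd, sub_self]
  -- p * b = 0
  have pb0 : (a * ad) * b = 0 := by
    have h : ad * (a * b) = lam • ((ad * (1 - a * ad)) * (b * a * (1 - b * bd))) := by
      rw [hab, mul_smul_comm]
      congr 1
      noncomm_ring
    rw [ZA, zero_mul, smul_zero] at h
    rw [hca, mul_assoc]
    exact h
  -- a * q = 0
  have aq0 : a * (b * bd) = 0 := by
    have h : (a * b) * bd = lam • (((1 - a * ad) * b * a) * ((1 - b * bd) * bd)) := by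
      rw [hab, smul_mul_assoc]
      congr 1
      noncomm_ring
    rw [ZB, mul_zero, smul_zero] at h
    rw [← mul_assoc]
    exact h
  -- reduced hypothesis : a * b = lam • (b * a)
  have habc : a * b = lam • (b * a) := by
    have e1 : (1 - a * ad) * b = b := by rw [sub_mul, one_mul, pb0, sub_zero]
    have e2 : b * a * (1 - b * bd) = b * a := by
      rw [mul_sub, mul_one, mul_assoc, aq0, mul_zero, sub_zero]
    rw [hab, e1, e2]
  have binv : b * a = lam⁻¹ • (a * b) := by rw [habc, inv_smul_smul₀ hlam]
  -- b * p = 0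
  have bp0 : b * (a * ad) = 0 := by
    have k1 : (a - a ^ 2 * ad) * (b * (a * ad)) * ad = lam • (b * (a * ad)) := by
      have c1 : (a - a ^ 2 * ad) * (b * (a * ad)) * ad =
          a * (b * ((a * ad) * ad)) - a * (((a * ad) * b) * ((a * ad) * ad)) := by
        noncomm_ring
      rw [c1, pb0, zero_mul, mul_zero, sub_zero, pad]
      have c2 : a * (b * ad) = (a * b) * ad := by rw [mul_assoc]
      rw [c2, habc, smul_mul_assoc, mul_assoc]
    have hiter : b * (a * ad) = lam⁻¹ • ((a - a ^ 2 * ad) * (b * (a * ad)) * ad) := by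
      rw [k1, inv_smul_smul₀ hlam]
    exact fix_zero_left _ _ _ lam hqa hiter
  -- a * (b^2 * bd) = 0
  have ab2 : a * (b ^ 2 * bd) = 0 := by
    have e : b ^ 2 * bd = (b * bd) * b := by
      have : (b * bd) * b = b ^ 2 * bd := by
        calc (b * bd) * b = b * (bd * b) := by rw [mul_assoc]
          _ = b * (b * bd) := by rw [← hcb]
          _ = b ^ 2 * bd := by noncomm_ring
      exact this.symm
    rw [e, ← mul_assoc, aq0, zero_mul]
  -- q * a = 0
  have qa0 : (b * bd) * a = 0 := by
    have k2 : bd * ((b * bd) * a) * (b - b ^ 2 * bd) = lam • ((b * bd) * a) := by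
      have c1 : bd * ((b * bd) * a) * (b - b ^ 2 * bd) =
          (bd * (b * bd)) * (a * b) - (bd * (b * bd)) * (a * (b ^ 2 * bd)) := by
        noncomm_ring
      rw [c1, ab2, mul_zero, sub_zero, bdq, habc, mul_smul_comm, ← mul_assoc, ← hcb]
    have hiter : (b * bd) * a = lam⁻¹ • (bd * ((b * bd) * a) * (b - b ^ 2 * bd)) := by
      rw [k2, inv_smul_smul₀ hlam]
    exact fix_zero_right _ _ _ lam hqb hiter
  -- all cross products vanish
  have adb0 : ad * b = 0 := by
    calc ad * b = (ad * (a * ad)) * b := by rw [adp]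
      _ = ad * ((a * ad) * b) := by rw [mul_assoc]
      _ = 0 := by rw [pb0, mul_zero]
  have bad0 : b * ad = 0 := by
    calc b * ad = b * ((a * ad) * ad) := by rw [pad]
      _ = (b * (a * ad)) * ad := by rw [← mul_assoc]
      _ = 0 := by rw [bp0, zero_mul]
  have abd0 : a * bd = 0 := by
    calc a * bd = a * ((b * bd) * bd) := by rw [qbd]
      _ = (a * (b * bd)) * bd := by rw [← mul_assoc]
      _ = 0 := by rw [aq0, zero_mul]
  have bda0 : bd * a = 0 := by
    calc bd * a = (bd * (b * bd)) * a := by rw [bdq]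
      _ = bd * ((b * bd) * a) := by rw [mul_assoc]
      _ = 0 := by rw [qa0, mul_zero]
  have adbd0 : ad * bd = 0 := by
    calc ad * bd = ad * ((b * bd) * bd) := by rw [qbd]
      _ = (ad * b) * (bd * bd) := by noncomm_ring
      _ = 0 := by rw [adb0, zero_mul]
  have bdad0 : bd * ad = 0 := by
    calc bd * ad = bd * ((a * ad) * ad) := by rw [pad]
      _ = (bd * a) * (ad * ad) := by noncomm_ring
      _ = 0 := by rw [bda0, zero_mul]
  -- the candidate
  refine ⟨ad + bd, ?_, ?_, ?_⟩
  · show (a + b) * (ad + bd) = (ad + bd) * (a + b)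
    have C1 : (a + b) * (ad + bd) = a * ad + b * bd := by
      rw [add_mul, mul_add, mul_add, abd0, bad0, add_zero, zero_add]
    have C2 : (ad + bd) * (a + b) = a * ad + b * bd := by
      rw [add_mul, mul_add, mul_add, adb0, bda0, add_zero, zero_add, ← hca, ← hcb]
    rw [C1, C2]
  · show (ad + bd) * (a + b) * (ad + bd) = ad + bd
    have C2 : (ad + bd) * (a + b) = a * ad + b * bd := by
      rw [add_mul, mul_add, mul_add, adb0, bda0, add_zero, zero_add, ← hca, ← hcb]
    rw [C2, add_mul, mul_add, mul_add, pad, qbd]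
    have e1 : a * ad * bd = 0 := by rw [mul_assoc, adbd0, mul_zero]
    have e2 : b * bd * ad = 0 := by rw [mul_assoc, bdad0, mul_zero]
    rw [e1, e2, add_zero, zero_add]
  · show IsQuasinilpotent ((a + b) - (a + b) ^ 2 * (ad + bd))
    have C1 : (a + b) * (ad + bd) = a * ad + b * bd := by
      rw [add_mul, mul_add, mul_add, abd0, bad0, add_zero, zero_add]
    have C4 : (a + b) - (a + b) ^ 2 * (ad + bd) = (a - a ^ 2 * ad) + (b - b ^ 2 * bd) := by
      have e1 : (a + b) ^ 2 * (ad + bd) = (a + b) * ((a + b) * (ad + bd)) := by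
        noncomm_ring
      rw [e1, C1, mul_add, add_mul, add_mul]
      have e2 : a * (a * ad) = a ^ 2 * ad := by noncomm_ring
      have e3 : b * (b * bd) = b ^ 2 * bd := by noncomm_ring
      rw [e2, e3, aq0, bp0, add_zero, zero_add]
      abel
    rw [C4]
    refine qn_add _ _ lam hlam ?_ hqa hqb
    -- (a - a^2 ad)(b - b^2 bd) = a*b, (b - b^2 bd)(a - a^2 ad) = b*a
    have C5 : (a - a ^ 2 * ad) * (b - b ^ 2 * bd) = a * b := by
      have c1 : (a - a ^ 2 * ad) * (b - b ^ 2 * bd) =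
          a * b - a * (b ^ 2 * bd) - a * ((a * ad) * b)
            + a * (((a * ad) * b) * (b * bd)) := by
        noncomm_ring
      rw [c1, ab2, pb0, mul_zero, zero_mul, mul_zero, sub_zero, sub_zero, add_zero]
    have C6 : (b - b ^ 2 * bd) * (a - a ^ 2 * ad) = b * a := by
      have bap0 : (b * a) * (a * ad) = 0 := by
        rw [binv, smul_mul_assoc, mul_assoc, bp0, mul_zero, smul_zero]
      have b2a0 : (b ^ 2 * bd) * a = 0 := by
        have e : b ^ 2 * bd = b * (b * bd) := by noncomm_ring
        rw [e, mul_assoc, qa0, mul_zero]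
      have c1 : (b - b ^ 2 * bd) * (a - a ^ 2 * ad) =
          b * a - (b * a) * (a * ad) - (b ^ 2 * bd) * a
            + ((b ^ 2 * bd) * a) * (a * ad) := by
        noncomm_ring
      rw [c1, bap0, b2a0, zero_mul, sub_zero, sub_zero, add_zero]
    rw [C5, C6, habc]
end

section
/- Let A be a complex unital Banach algebra, a, b ∈ A with g-Drazin inverses, λ ≠ 0, and suppose ab = λ a^π b a b^π. Then (a+b)^d = b^π a^d + b^d a^π + Σ_{n≥0} (b^d)^{n+2} a (a+b)^n a^π + b^π Σ_{n≥0} (a+b)^n b (a^d)^{n+2} − Σ_{n≥0} Σ_{k≥0} (b^d)^{k+1} a (a+b)^{n+k} b (a^d)^{n+2} − Σ_{n≥0} (b^d)^{n+2} a (a+b)^n b a^d. -/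
open Filter Topology

variable {𝔸 : Type*} [NormedRing 𝔸] [NormedAlgebra ℂ 𝔸] [CompleteSpace 𝔸]

section AuxLemmas

lemma qn_norm_pow_le {z : 𝔸} (hz : IsQuasinilpotent z) {ε : ℝ} (hε : 0 < ε) :
    ∃ C : ℝ, 0 < C ∧ ∀ n : ℕ, ‖z ^ n‖ ≤ C * ε ^ n := by
  have h := spectrum.pow_norm_pow_one_div_tendsto_nhds_spectralRadius z
  rw [IsQuasinilpotent] at hz
  rw [hz] at h
  have hev : ∀ᶠ n : ℕ in atTop, ENNReal.ofReal (‖z ^ n‖ ^ (1 / (n:ℝ))) < ENNReal.ofReal ε :=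
    h.eventually (gt_mem_nhds (by simpa using hε))
  obtain ⟨N, hN⟩ := hev.exists_forall_of_atTop
  have key : ∀ n : ℕ, N ≤ n → 1 ≤ n → ‖z ^ n‖ ≤ ε ^ n := by
    intro n hn h1
    have h2 := hN n hn
    rw [ENNReal.ofReal_lt_ofReal_iff hε] at h2
    have h3 : (‖z ^ n‖ ^ (1 / (n:ℝ))) ^ n ≤ ε ^ n :=
      pow_le_pow_left₀ (Real.rpow_nonneg (norm_nonneg _) _) h2.le n
    rwa [one_div, Real.rpow_inv_natCast_pow (norm_nonneg _) (by omega)] at h3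
  refine ⟨(∑ k ∈ Finset.range (N + 1), ‖z ^ k‖ / ε ^ k) + 1, by positivity, fun n => ?_⟩
  rcases le_or_gt n N with hn | hn
  · have h4 : ‖z ^ n‖ / ε ^ n ≤ ∑ k ∈ Finset.range (N + 1), ‖z ^ k‖ / ε ^ k :=
      Finset.single_le_sum (f := fun k => ‖z ^ k‖ / ε ^ k)
        (fun k _ => by positivity) (Finset.mem_range.2 (by omega))
    have h5 : ‖z ^ n‖ / ε ^ n ≤ (∑ k ∈ Finset.range (N + 1), ‖z ^ k‖ / ε ^ k) + 1 := by linarith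
    calc ‖z ^ n‖ = (‖z ^ n‖ / ε ^ n) * ε ^ n := by field_simp
    _ ≤ _ := by apply mul_le_mul_of_nonneg_right h5 (by positivity)
  · have := key n (by omega) (by omega)
    nlinarith [pow_pos hε n, Finset.sum_nonneg (fun k (_ : k ∈ Finset.range (N+1)) =>
      div_nonneg (norm_nonneg (z ^ k)) (pow_nonneg hε.le k))]

lemma qn_of_norm_pow_le {z : 𝔸}
    (h : ∀ ε : ℝ, 0 < ε → ∃ C : ℝ, 0 < C ∧ ∀ n, ‖z ^ n‖ ≤ C * ε ^ n) :
    IsQuasinilpotent z := by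
  have hg := spectrum.pow_norm_pow_one_div_tendsto_nhds_spectralRadius z
  have key : ∀ ε : ℝ, 0 < ε → spectralRadius ℂ z ≤ ENNReal.ofReal (2 * ε) := by
    intro ε hε
    obtain ⟨C, hC, hCn⟩ := h ε hε
    refine le_of_tendsto hg ?_
    obtain ⟨N, hN⟩ := pow_unbounded_of_one_lt C (one_lt_two (α := ℝ))
    filter_upwards [eventually_ge_atTop (max N 1)] with n hn
    have h1 : 1 ≤ n := le_trans (le_max_right N 1) hn
    have hCn2 : C ≤ 2 ^ n := le_trans hN.le
      (pow_le_pow_right₀ one_le_two (le_trans (le_max_left N 1) hn))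
    have hnn : ‖z ^ n‖ ^ (1 / (n:ℝ)) ≤ 2 * ε := by
      have e1 : ‖z ^ n‖ ^ (1 / (n:ℝ)) ≤ (C * ε ^ n) ^ (1 / (n:ℝ)) :=
        Real.rpow_le_rpow (norm_nonneg _) (hCn n) (by positivity)
      have e2 : (C * ε ^ n) ^ (1 / (n:ℝ)) = C ^ (1 / (n:ℝ)) * (ε ^ n) ^ (1 / (n:ℝ)) :=
        Real.mul_rpow hC.le (by positivity)
      have e3 : (ε ^ n) ^ (1 / (n:ℝ)) = ε := by
        rw [one_div, Real.pow_rpow_inv_natCast hε.le (by omega)]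
      have e4 : C ^ (1 / (n:ℝ)) ≤ 2 := by
        calc C ^ (1 / (n:ℝ)) ≤ ((2:ℝ) ^ n) ^ (1 / (n:ℝ)) :=
              Real.rpow_le_rpow hC.le hCn2 (by positivity)
        _ = 2 := by rw [one_div, Real.pow_rpow_inv_natCast (by norm_num) (by omega)]
      calc ‖z ^ n‖ ^ (1 / (n:ℝ)) ≤ C ^ (1 / (n:ℝ)) * ε := by rw [← e3]; rw [e2] at e1; exact e1
      _ ≤ 2 * ε := by nlinarith [Real.rpow_nonneg (le_trans zero_le_one one_le_two) (1/(n:ℝ))]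
    exact ENNReal.ofReal_le_ofReal hnn
  rw [IsQuasinilpotent]
  refine le_antisymm ?_ zero_le
  refine ENNReal.le_of_forall_pos_le_add fun ε hε _ => ?_
  have := key ((ε:ℝ)/2) (by positivity)
  calc spectralRadius ℂ z ≤ ENNReal.ofReal (2 * ((ε:ℝ)/2)) := this
  _ = ENNReal.ofReal (ε:ℝ) := by ring_nf
  _ ≤ 0 + ε := by rw [zero_add, ENNReal.ofReal_coe_nnreal]

lemma norm_pow_aux (v : 𝔸) (n : ℕ) : ‖v ^ n‖ ≤ max 1 ‖(1:𝔸)‖ * (‖v‖ + 1) ^ n := by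
  induction n with
  | zero => simpa using le_max_right 1 ‖(1:𝔸)‖
  | succ n ih =>
    rw [pow_succ']
    calc ‖v * v ^ n‖ ≤ ‖v‖ * ‖v ^ n‖ := norm_mul_le _ _
    _ ≤ ‖v‖ * (max 1 ‖(1:𝔸)‖ * (‖v‖ + 1) ^ n) :=
        mul_le_mul_of_nonneg_left ih (norm_nonneg v)
    _ ≤ (‖v‖ + 1) * (max 1 ‖(1:𝔸)‖ * (‖v‖ + 1) ^ n) := by
        have h1 : (0:ℝ) < max 1 ‖(1:𝔸)‖ := lt_of_lt_of_le one_pos (le_max_left _ _)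
        have h2 : (0:ℝ) ≤ (‖v‖ + 1) ^ n := by positivity
        nlinarith [norm_nonneg v]
    _ = max 1 ‖(1:𝔸)‖ * (‖v‖ + 1) ^ (n + 1) := by ring
lemma prod_pow_bound {w : 𝔸} (hw : IsQuasinilpotent w) (v : 𝔸) {ε : ℝ} (hε : 0 < ε) :
    ∃ C : ℝ, 0 < C ∧ ∀ n, ‖w ^ n‖ * ‖v ^ n‖ ≤ C * ε ^ n := by
  obtain ⟨C, hC, hCn⟩ := qn_norm_pow_le hw (ε := ε / (‖v‖ + 1))
    (by positivity)
  refine ⟨C * max 1 ‖(1:𝔸)‖, by positivity, fun n => ?_⟩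
  calc ‖w ^ n‖ * ‖v ^ n‖ ≤ (C * (ε / (‖v‖ + 1)) ^ n) * (max 1 ‖(1:𝔸)‖ * (‖v‖ + 1) ^ n) := by
        apply mul_le_mul (hCn n) (norm_pow_aux v n) (norm_nonneg _)
        positivity
  _ = C * max 1 ‖(1:𝔸)‖ * ((ε / (‖v‖ + 1)) ^ n * (‖v‖ + 1) ^ n) := by ring
  _ = C * max 1 ‖(1:𝔸)‖ * ((ε / (‖v‖ + 1)) * (‖v‖ + 1)) ^ n := by rw [mul_pow]
  _ = C * max 1 ‖(1:𝔸)‖ * ε ^ n := by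
        rw [div_mul_cancel₀ ε (by positivity : (‖v‖ + 1) ≠ 0)]
lemma eq_zero_of_rec {u w v : 𝔸} {c : ℂ}
    (hbound : ∀ ε : ℝ, 0 < ε → ∃ C : ℝ, 0 < C ∧ ∀ n, ‖w ^ n‖ * ‖v ^ n‖ ≤ C * ε ^ n)
    (h : ∀ n : ℕ, u = c ^ n • (w ^ n * (u * v ^ n))) : u = 0 := by
  obtain ⟨C, hC, hCn⟩ := hbound (1 / (2 * (‖c‖ + 1))) (by positivity)
  have hb : ∀ n : ℕ, ‖u‖ ≤ (C * ‖u‖) * (‖c‖ / (2 * (‖c‖ + 1))) ^ n := by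
    intro n
    calc ‖u‖ = ‖c ^ n • (w ^ n * (u * v ^ n))‖ := by rw [← h n]
    _ = ‖c‖ ^ n * ‖w ^ n * (u * v ^ n)‖ := by rw [norm_smul, norm_pow]
    _ ≤ ‖c‖ ^ n * (‖w ^ n‖ * (‖u‖ * ‖v ^ n‖)) := by
        apply mul_le_mul_of_nonneg_left _ (by positivity)
        calc ‖w ^ n * (u * v ^ n)‖ ≤ ‖w ^ n‖ * ‖u * v ^ n‖ := norm_mul_le _ _
        _ ≤ ‖w ^ n‖ * (‖u‖ * ‖v ^ n‖) :=
            mul_le_mul_of_nonneg_left (norm_mul_le _ _) (norm_nonneg _)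
    _ = ‖c‖ ^ n * ‖u‖ * (‖w ^ n‖ * ‖v ^ n‖) := by ring
    _ ≤ ‖c‖ ^ n * ‖u‖ * (C * (1 / (2 * (‖c‖ + 1))) ^ n) := by
        apply mul_le_mul_of_nonneg_left (hCn n) (by positivity)
    _ = (C * ‖u‖) * (‖c‖ * (1 / (2 * (‖c‖ + 1)))) ^ n := by ring
    _ = (C * ‖u‖) * (‖c‖ / (2 * (‖c‖ + 1))) ^ n := by rw [mul_one_div]
  have hr : |‖c‖ / (2 * (‖c‖ + 1))| < 1 := by
    rw [abs_of_nonneg (by positivity)]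
    rw [div_lt_one (by positivity)]
    nlinarith [norm_nonneg c]
  have ht : Tendsto (fun n : ℕ => (C * ‖u‖) * (‖c‖ / (2 * (‖c‖ + 1))) ^ n) atTop (𝓝 0) := by
    have := tendsto_pow_atTop_nhds_zero_of_abs_lt_one hr
    simpa using this.const_mul (C * ‖u‖)
  have : ‖u‖ ≤ 0 := ge_of_tendsto ht (Eventually.of_forall hb)
  simpa using le_antisymm this (norm_nonneg u)

lemma qn_add_of_semicomm {x y : 𝔸} {μ : ℂ} (hμ : ‖μ‖ ≤ 1)
    (hxy : x * y = μ • (y * x)) (hx : IsQuasinilpotent x) (hy : IsQuasinilpotent y) :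
    IsQuasinilpotent (x + y) := by
  have hxym : ∀ m : ℕ, x * y ^ m = μ ^ m • (y ^ m * x) := by
    intro m
    induction m with
    | zero => simp
    | succ m ih =>
      rw [pow_succ' y, ← mul_assoc, hxy, smul_mul_assoc, mul_assoc, ih, mul_smul_comm,
        smul_smul, ← mul_assoc, ← pow_succ' y, ← pow_succ' μ]
  have expand : ∀ n : ℕ, ∃ c : ℕ → ℂ,
      ((x + y) ^ n = ∑ k ∈ Finset.range (n + 1), c k • (y ^ (n - k) * x ^ k)) ∧
      ∀ k, ‖c k‖ ≤ n.choose k := by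
    intro n
    induction n with
    | zero =>
      refine ⟨fun k => if k = 0 then 1 else 0, by simp, fun k => ?_⟩
      rcases Nat.eq_zero_or_pos k with h | h
      · simp [h]
      · simp [Nat.pos_iff_ne_zero.mp h, Nat.choose_eq_zero_of_lt h]
    | succ n ih =>
      obtain ⟨c, hsum, hbd⟩ := ih
      have hctop : c (n + 1) = 0 := by
        have := hbd (n + 1)
        rw [Nat.choose_succ_self] at this
        simpa using norm_le_zero_iff.mp (by exact_mod_cast this)
      refine ⟨fun k => (if k = 0 then 0 else c (k - 1) * μ ^ (n + 1 - k)) + c k, ?_, ?_⟩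
      · have hx_side : x * ((x + y) ^ n) =
            ∑ k ∈ Finset.range (n + 1), (c k * μ ^ (n - k)) • (y ^ (n - k) * x ^ (k + 1)) := by
          rw [hsum, Finset.mul_sum]
          refine Finset.sum_congr rfl fun k _ => ?_
          rw [mul_smul_comm, ← mul_assoc, hxym, smul_mul_assoc, mul_assoc, ← pow_succ' x,
            smul_smul]
        have hy_side : y * ((x + y) ^ n) =
            ∑ k ∈ Finset.range (n + 1), c k • (y ^ (n + 1 - k) * x ^ k) := by
          rw [hsum, Finset.mul_sum]
          refine Finset.sum_congr rfl fun k hk => ?_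
          rw [Finset.mem_range] at hk
          rw [mul_smul_comm, ← mul_assoc, ← pow_succ' y]
          congr 3
          omega
        calc (x + y) ^ (n + 1) = (x + y) * (x + y) ^ n := by rw [← pow_succ']
        _ = x * ((x + y) ^ n) + y * ((x + y) ^ n) := by rw [add_mul]
        _ = ∑ k ∈ Finset.range (n + 1), (c k * μ ^ (n - k)) • (y ^ (n - k) * x ^ (k + 1))
            + ∑ k ∈ Finset.range (n + 1), c k • (y ^ (n + 1 - k) * x ^ k) := by
            rw [hx_side, hy_side]
        _ = ∑ k ∈ Finset.range (n + 2),
              ((if k = 0 then 0 else c (k - 1) * μ ^ (n + 1 - k)) + c k) •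
                (y ^ (n + 1 - k) * x ^ k) := by
            rw [Finset.sum_congr rfl (fun k _ => add_smul _ _ _), Finset.sum_add_distrib]
            congr 1
            · rw [Finset.sum_range_succ' (fun k =>
                (if k = 0 then 0 else c (k - 1) * μ ^ (n + 1 - k)) • (y ^ (n + 1 - k) * x ^ k))]
              have e0 : (if (0:ℕ) = 0 then (0:ℂ) else c (0 - 1) * μ ^ (n + 1 - 0)) •
                  (y ^ (n + 1 - 0) * x ^ (0:ℕ)) = 0 := by simp
              rw [e0, add_zero]
              refine Finset.sum_congr rfl fun k hk => ?_
              rw [Finset.mem_range] at hk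
              rw [if_neg (by omega : ¬(k + 1 = 0))]
              have e1 : n + 1 - (k + 1) = n - k := by omega
              rw [e1, Nat.add_sub_cancel]
            · rw [Finset.sum_range_succ (fun k => c k • (y ^ (n + 1 - k) * x ^ k)) (n + 1)]
              simp [hctop]
      · intro k
        dsimp only
        rcases Nat.eq_zero_or_pos k with h | h
        · subst h
          rw [if_pos rfl, zero_add]
          simpa using hbd 0
        · obtain ⟨j, rfl⟩ : ∃ j, k = j + 1 := ⟨k - 1, by omega⟩
          rw [if_neg (Nat.succ_ne_zero j), Nat.add_sub_cancel]
          calc ‖c j * μ ^ (n + 1 - (j + 1)) + c (j + 1)‖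
              ≤ ‖c j‖ * ‖μ‖ ^ (n + 1 - (j + 1)) + ‖c (j + 1)‖ := by
                refine le_trans (norm_add_le _ _) ?_
                rw [norm_mul, norm_pow]
          _ ≤ (n.choose j) * 1 + (n.choose (j + 1)) := by
                have h5 := pow_le_one₀ (norm_nonneg μ) hμ (n := n + 1 - (j + 1))
                have h2 := hbd j
                have h3 := hbd (j + 1)
                nlinarith [norm_nonneg (c j), pow_nonneg (norm_nonneg μ) (n + 1 - (j + 1))]
          _ = ((n + 1).choose (j + 1) : ℝ) := by
                rw [Nat.choose_succ_succ n j]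
                push_cast
                ring
  refine qn_of_norm_pow_le fun ε hε => ?_
  obtain ⟨Cx, hCx, hCxn⟩ := qn_norm_pow_le hx (ε := ε / 2) (by positivity)
  obtain ⟨Cy, hCy, hCyn⟩ := qn_norm_pow_le hy (ε := ε / 2) (by positivity)
  refine ⟨Cx * Cy, by positivity, fun n => ?_⟩
  obtain ⟨c, hsum, hbd⟩ := expand n
  calc ‖(x + y) ^ n‖ ≤ ∑ k ∈ Finset.range (n + 1), ‖c k • (y ^ (n - k) * x ^ k)‖ := by
        rw [hsum]; exact norm_sum_le _ _
  _ ≤ ∑ k ∈ Finset.range (n + 1), (n.choose k : ℝ) * ((Cy * (ε/2) ^ (n - k)) * (Cx * (ε/2) ^ k)) := by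
      refine Finset.sum_le_sum fun k _ => ?_
      rw [norm_smul]
      have hn1 : ‖y ^ (n - k) * x ^ k‖ ≤ (Cy * (ε/2) ^ (n - k)) * (Cx * (ε/2) ^ k) :=
        le_trans (norm_mul_le _ _) (mul_le_mul (hCyn _) (hCxn _) (norm_nonneg _) (by positivity))
      exact mul_le_mul (hbd k) hn1 (norm_nonneg _) (by positivity)
  _ = (Cx * Cy) * ∑ k ∈ Finset.range (n + 1), (ε/2) ^ k * (ε/2) ^ (n - k) * (n.choose k : ℝ) := by
      rw [Finset.mul_sum]
      exact Finset.sum_congr rfl fun k _ => by ring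
  _ = (Cx * Cy) * ((ε/2 + ε/2) ^ n) := by rw [← add_pow]
  _ = (Cx * Cy) * ε ^ n := by norm_num

end AuxLemmas

/-- explicit formula for `(a+b)ᵈ` under `a*b = λ • (aᵖ*b*a*bᵖ)`. -/
theorem gDrazin_add_formula (a b ad bd : 𝔸) (lam : ℂ) (hlam : lam ≠ 0)
    (ha : IsGDrazinInverse a ad) (hb : IsGDrazinInverse b bd)
    (hab : a * b = lam • ((1 - a * ad) * b * a * (1 - b * bd))) :
    IsGDrazinInverse (a + b)
      ((1 - b * bd) * ad + bd * (1 - a * ad)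
        + ∑' n : ℕ, bd ^ (n + 2) * a * (a + b) ^ n * (1 - a * ad)
        + (1 - b * bd) * ∑' n : ℕ, (a + b) ^ n * b * ad ^ (n + 2)
        - ∑' n : ℕ, ∑' k : ℕ, bd ^ (k + 1) * a * (a + b) ^ (n + k) * b * ad ^ (n + 2)
        - ∑' n : ℕ, bd ^ (n + 2) * a * (a + b) ^ n * b * ad) := by
  obtain ⟨hca, hada, haq⟩ := ha
  obtain ⟨hcb, hbdb, hbq⟩ := hb
  -- basic identities
  have h_adad : a * ad * ad = ad := by rw [hca.eq]; exact hada
  have h_bdbd : b * bd * bd = bd := by rw [hcb.eq]; exact hbdb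
  have sw : ∀ X : 𝔸, ad * (a * X) = a * (ad * X) := fun X => by
    rw [← mul_assoc, ← hca.eq, mul_assoc]
  have r1 : ∀ X : 𝔸, ad * (a * (ad * X)) = ad * X := fun X => by
    rw [← mul_assoc, ← mul_assoc, hada]
  have s1 : ∀ X : 𝔸, bd * (b * (bd * X)) = bd * X := fun X => by
    rw [← mul_assoc, ← mul_assoc, hbdb]
  have swb2 : ∀ X : 𝔸, bd * (b * X) = b * (bd * X) := fun X => by
    rw [← mul_assoc, ← hcb.eq, mul_assoc]
  have hidem : a * ad * (a * ad) = a * ad := by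
    calc a * ad * (a * ad) = a * (ad * (a * ad)) := by rw [mul_assoc]
    _ = a * (ad * a * ad) := by rw [← mul_assoc ad a ad]
    _ = a * ad := by rw [hada]
  have key0 : (1 - b * bd) * bd = 0 := by
    rw [sub_mul, one_mul, h_bdbd, sub_self]
  have key1 : a * ad * (1 - a * ad) = 0 := by
    rw [mul_sub, mul_one, hidem, sub_self]
  -- a * b * bd = 0
  have habbd : a * b * bd = 0 := by
    calc a * b * bd = (lam • ((1 - a * ad) * b * a * (1 - b * bd))) * bd := by rw [hab]
    _ = lam • ((1 - a * ad) * b * a * ((1 - b * bd) * bd)) := by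
        rw [smul_mul_assoc, mul_assoc]
    _ = 0 := by rw [key0, mul_zero, smul_zero]
  have habbd' : a * (b * bd) = 0 := by rw [← mul_assoc]; exact habbd
  have habd : a * bd = 0 := by
    calc a * bd = a * (b * bd * bd) := by rw [h_bdbd]
    _ = a * (b * bd) * bd := by rw [← mul_assoc]
    _ = 0 := by rw [habbd', zero_mul]
  -- ad * b = 0
  have E1 : a * (ad * (a * b)) = 0 := by
    have e : a * ad * (a * b) = 0 := by
      calc a * ad * (a * b) = a * ad * (lam • ((1 - a * ad) * b * a * (1 - b * bd))) := by
            rw [hab]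
      _ = lam • (a * ad * ((1 - a * ad) * b * a * (1 - b * bd))) := by rw [mul_smul_comm]
      _ = lam • (a * ad * (1 - a * ad) * b * a * (1 - b * bd)) := by
            simp only [mul_assoc]
      _ = 0 := by rw [key1, zero_mul, zero_mul, zero_mul, smul_zero]
    rw [← mul_assoc]; exact e
  have hadb : ad * b = 0 := by
    have E2 : ad * (ad * (a * (ad * (a * b)))) = 0 := by rw [E1, mul_zero, mul_zero]
    calc ad * b = ad * (a * (ad * b)) := (r1 b).symm
    _ = ad * (ad * (a * b)) := by rw [← sw b]
    _ = ad * (ad * (a * (ad * (a * b)))) := by rw [r1 (a * b)]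
    _ = 0 := E2
  have h7 : (1 - a * ad) * b = b := by
    rw [sub_mul, one_mul, mul_assoc, hadb, mul_zero, sub_zero]
  have h8 : a * (1 - b * bd) = a := by
    rw [mul_sub, mul_one, habbd', sub_zero]
  have hab2 : a * b = lam • (b * a) := by
    rw [hab]
    congr 1
    calc (1 - a * ad) * b * a * (1 - b * bd) = b * a * (1 - b * bd) := by rw [h7]
    _ = b * (a * (1 - b * bd)) := by rw [mul_assoc]
    _ = b * a := by rw [h8]
  -- u := b * (a * ad) = 0
  have hu_step : (a - a ^ 2 * ad) * ((b * (a * ad)) * ad) = lam • (b * (a * ad)) := by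
    have e1 : ad * ((b * (a * ad)) * ad) = 0 := by
      rw [← mul_assoc, ← mul_assoc, hadb, zero_mul, zero_mul]
    have e2 : a * ((b * (a * ad)) * ad) = lam • (b * (a * ad)) := by
      calc a * ((b * (a * ad)) * ad) = ((a * b) * (a * ad)) * ad := by
            simp only [mul_assoc]
      _ = ((lam • (b * a)) * (a * ad)) * ad := by rw [hab2]
      _ = lam • (b * (a * (a * (ad * ad)))) := by
            simp only [smul_mul_assoc, mul_assoc]
      _ = lam • (b * (a * (a * ad * ad))) := by rw [← mul_assoc a ad ad]
      _ = lam • (b * (a * ad)) := by rw [h_adad]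
    calc (a - a ^ 2 * ad) * ((b * (a * ad)) * ad)
        = a * ((b * (a * ad)) * ad) - a ^ 2 * ad * ((b * (a * ad)) * ad) := by
          rw [sub_mul]
    _ = lam • (b * (a * ad)) - a * (a * (ad * ((b * (a * ad)) * ad))) := by
          rw [e2, pow_two]; simp only [mul_assoc]
    _ = lam • (b * (a * ad)) := by rw [e1, mul_zero, mul_zero, sub_zero]
  have hu_iter : ∀ n : ℕ, b * (a * ad) =
      (lam⁻¹) ^ n • ((a - a ^ 2 * ad) ^ n * ((b * (a * ad)) * ad ^ n)) := by
    intro n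
    induction n with
    | zero => simp
    | succ n ih =>
      have e3 : (a - a ^ 2 * ad) ^ (n + 1) * ((b * (a * ad)) * ad ^ (n + 1))
          = lam • ((a - a ^ 2 * ad) ^ n * ((b * (a * ad)) * ad ^ n)) := by
        calc (a - a ^ 2 * ad) ^ (n + 1) * ((b * (a * ad)) * ad ^ (n + 1))
            = ((a - a ^ 2 * ad) ^ n * (a - a ^ 2 * ad)) * ((b * (a * ad)) * (ad * ad ^ n)) := by
              rw [pow_succ (a - a ^ 2 * ad) n, pow_succ' ad n]
        _ = (a - a ^ 2 * ad) ^ n * (((a - a ^ 2 * ad) * ((b * (a * ad)) * ad)) * ad ^ n) := by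
              simp only [mul_assoc]
        _ = (a - a ^ 2 * ad) ^ n * ((lam • (b * (a * ad))) * ad ^ n) := by rw [hu_step]
        _ = lam • ((a - a ^ 2 * ad) ^ n * ((b * (a * ad)) * ad ^ n)) := by
              rw [smul_mul_assoc, mul_smul_comm]
      calc b * (a * ad)
          = (lam⁻¹) ^ n • ((a - a ^ 2 * ad) ^ n * ((b * (a * ad)) * ad ^ n)) := ih
      _ = (lam⁻¹) ^ n • (lam⁻¹ • (lam • ((a - a ^ 2 * ad) ^ n * ((b * (a * ad)) * ad ^ n)))) := by
            rw [inv_smul_smul₀ hlam]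
      _ = (lam⁻¹) ^ (n + 1) • ((a - a ^ 2 * ad) ^ (n + 1) * ((b * (a * ad)) * ad ^ (n + 1))) := by
            rw [e3, smul_smul, ← pow_succ lam⁻¹ n]
  have hu0 : b * (a * ad) = 0 :=
    eq_zero_of_rec (fun ε hε => prod_pow_bound haq ad hε) hu_iter
  have hbad : b * ad = 0 := by
    calc b * ad = b * (a * ad * ad) := by rw [h_adad]
    _ = (b * (a * ad)) * ad := by simp only [mul_assoc]
    _ = 0 := by rw [hu0, zero_mul]
  -- v := bd * (b * a) = 0
  have hv_step : bd * ((bd * (b * a)) * (b - b ^ 2 * bd)) = lam • (bd * (b * a)) := by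
    have e4 : (bd * (b * a)) * b = lam • (b * (bd * (b * a))) := by
      calc (bd * (b * a)) * b = bd * (b * (a * b)) := by simp only [mul_assoc]
      _ = bd * (b * (lam • (b * a))) := by rw [hab2]
      _ = lam • (bd * (b * (b * a))) := by rw [mul_smul_comm, mul_smul_comm]
      _ = lam • (b * (bd * (b * a))) := by rw [swb2]
    have e5 : (bd * (b * a)) * (b ^ 2 * bd) = 0 := by
      have e6 : (bd * (b * a)) * (b * bd) = 0 := by
        calc (bd * (b * a)) * (b * bd) = bd * (b * (a * (b * bd))) := by simp only [mul_assoc]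
        _ = 0 := by rw [habbd', mul_zero, mul_zero]
      calc (bd * (b * a)) * (b ^ 2 * bd) = ((bd * (b * a)) * b) * (b * bd) := by
            rw [pow_two]; simp only [mul_assoc]
      _ = (lam • (b * (bd * (b * a)))) * (b * bd) := by rw [e4]
      _ = lam • (b * ((bd * (b * a)) * (b * bd))) := by
            rw [smul_mul_assoc, mul_assoc]
      _ = 0 := by rw [e6, mul_zero, smul_zero]
    calc bd * ((bd * (b * a)) * (b - b ^ 2 * bd))
        = bd * ((bd * (b * a)) * b - (bd * (b * a)) * (b ^ 2 * bd)) := by rw [mul_sub]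
    _ = bd * (lam • (b * (bd * (b * a)))) := by rw [e4, e5, sub_zero]
    _ = lam • (bd * (b * (bd * (b * a)))) := by rw [mul_smul_comm]
    _ = lam • (bd * (b * a)) := by rw [s1]
  have hv_iter : ∀ n : ℕ, bd * (b * a) =
      (lam⁻¹) ^ n • (bd ^ n * ((bd * (b * a)) * (b - b ^ 2 * bd) ^ n)) := by
    intro n
    induction n with
    | zero => simp
    | succ n ih =>
      have e3 : bd ^ (n + 1) * ((bd * (b * a)) * (b - b ^ 2 * bd) ^ (n + 1))
          = lam • (bd ^ n * ((bd * (b * a)) * (b - b ^ 2 * bd) ^ n)) := by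
        calc bd ^ (n + 1) * ((bd * (b * a)) * (b - b ^ 2 * bd) ^ (n + 1))
            = (bd ^ n * bd) * ((bd * (b * a)) * ((b - b ^ 2 * bd) * (b - b ^ 2 * bd) ^ n)) := by
              rw [pow_succ bd n, pow_succ' (b - b ^ 2 * bd) n]
        _ = bd ^ n * ((bd * ((bd * (b * a)) * (b - b ^ 2 * bd))) * (b - b ^ 2 * bd) ^ n) := by
              simp only [mul_assoc]
        _ = bd ^ n * ((lam • (bd * (b * a))) * (b - b ^ 2 * bd) ^ n) := by rw [hv_step]
        _ = lam • (bd ^ n * ((bd * (b * a)) * (b - b ^ 2 * bd) ^ n)) := by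
              rw [smul_mul_assoc, mul_smul_comm]
      calc bd * (b * a)
          = (lam⁻¹) ^ n • (bd ^ n * ((bd * (b * a)) * (b - b ^ 2 * bd) ^ n)) := ih
      _ = (lam⁻¹) ^ n • (lam⁻¹ • (lam • (bd ^ n * ((bd * (b * a)) * (b - b ^ 2 * bd) ^ n)))) := by
            rw [inv_smul_smul₀ hlam]
      _ = (lam⁻¹) ^ (n + 1) • (bd ^ (n + 1) * ((bd * (b * a)) * (b - b ^ 2 * bd) ^ (n + 1))) := by
            rw [e3, smul_smul, ← pow_succ lam⁻¹ n]
  have hv0 : bd * (b * a) = 0 := by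
    refine eq_zero_of_rec (fun ε hε => ?_) hv_iter
    obtain ⟨C, hC, hCn⟩ := prod_pow_bound hbq bd hε
    exact ⟨C, hC, fun n => by rw [mul_comm]; exact hCn n⟩
  have hbda : bd * a = 0 := by
    calc bd * a = bd * (b * (bd * a)) := (s1 a).symm
    _ = bd * (bd * (b * a)) := by rw [← mul_assoc b bd a, hcb.eq, mul_assoc bd b a]
    _ = 0 := by rw [hv0, mul_zero]
  have hbdad : bd * ad = 0 := by
    calc bd * ad = bd * (a * ad * ad) := by rw [h_adad]
    _ = (bd * a) * (ad * ad) := by simp only [mul_assoc]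
    _ = 0 := by rw [hbda, zero_mul]
  have zc1 : ∀ X : 𝔸, ad * (b * X) = 0 := fun X => by rw [← mul_assoc, hadb, zero_mul]
  have zc2 : ∀ X : 𝔸, bd * (a * X) = 0 := fun X => by rw [← mul_assoc, hbda, zero_mul]
  have hada' : ad * (a * ad) = ad := by rw [← mul_assoc]; exact hada
  have hbdb' : bd * (b * bd) = bd := by rw [← mul_assoc]; exact hbdb
  -- collapse the series
  have e3 : (∑' n : ℕ, bd ^ (n + 2) * a * (a + b) ^ n * (1 - a * ad)) = 0 := by
    have h0 : ∀ n : ℕ, bd ^ (n + 2) * a * (a + b) ^ n * (1 - a * ad) = 0 := by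
      intro n
      rw [pow_succ bd (n + 1), mul_assoc (bd ^ (n + 1)) bd a, hbda, mul_zero, zero_mul, zero_mul]
    rw [tsum_congr h0, tsum_zero]
  have e4 : (∑' n : ℕ, (a + b) ^ n * b * ad ^ (n + 2)) = 0 := by
    have h0 : ∀ n : ℕ, (a + b) ^ n * b * ad ^ (n + 2) = 0 := by
      intro n
      rw [pow_succ' ad (n + 1), ← mul_assoc, mul_assoc ((a + b) ^ n) b ad, hbad, mul_zero,
        zero_mul]
    rw [tsum_congr h0, tsum_zero]
  have e5 : (∑' n : ℕ, ∑' k : ℕ, bd ^ (k + 1) * a * (a + b) ^ (n + k) * b * ad ^ (n + 2)) = 0 := by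
    have h0 : ∀ n k : ℕ, bd ^ (k + 1) * a * (a + b) ^ (n + k) * b * ad ^ (n + 2) = 0 := by
      intro n k
      rw [pow_succ bd k, mul_assoc (bd ^ k) bd a, hbda, mul_zero, zero_mul, zero_mul, zero_mul]
    have h1 : ∀ n : ℕ,
        (∑' k : ℕ, bd ^ (k + 1) * a * (a + b) ^ (n + k) * b * ad ^ (n + 2)) = 0 := by
      intro n; rw [tsum_congr (h0 n), tsum_zero]
    rw [tsum_congr h1, tsum_zero]
  have e6 : (∑' n : ℕ, bd ^ (n + 2) * a * (a + b) ^ n * b * ad) = 0 := by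
    have h0 : ∀ n : ℕ, bd ^ (n + 2) * a * (a + b) ^ n * b * ad = 0 := by
      intro n
      rw [pow_succ bd (n + 1), mul_assoc (bd ^ (n + 1)) bd a, hbda, mul_zero, zero_mul,
        zero_mul, zero_mul]
    rw [tsum_congr h0, tsum_zero]
  have hT1 : (1 - b * bd) * ad = ad := by
    rw [sub_mul, one_mul, mul_assoc, hbdad, mul_zero, sub_zero]
  have hT2 : bd * (1 - a * ad) = bd := by
    rw [mul_sub, mul_one, ← mul_assoc, hbda, zero_mul, sub_zero]
  rw [e3, e4, e5, e6, hT1, hT2, mul_zero, add_zero, add_zero, sub_zero, sub_zero]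
  refine ⟨?_, ?_, ?_⟩
  · show (a + b) * (ad + bd) = (ad + bd) * (a + b)
    simp only [mul_add, add_mul, habd, hbad, hadb, hbda, add_zero, zero_add, hca.eq, hcb.eq]
  · show (ad + bd) * (a + b) * (ad + bd) = ad + bd
    simp only [mul_add, add_mul, mul_assoc, hadb, hbda, habd, hbad, zc1, zc2, hada', hbdb',
      mul_zero, zero_mul, add_zero, zero_add]
  · show IsQuasinilpotent ((a + b) - (a + b) ^ 2 * (ad + bd))
    have habb : a * (b * (b * bd)) = 0 := by
      calc a * (b * (b * bd)) = (a * b) * (b * bd) := by rw [← mul_assoc]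
      _ = (lam • (b * a)) * (b * bd) := by rw [hab2]
      _ = lam • (b * (a * (b * bd))) := by rw [smul_mul_assoc, mul_assoc]
      _ = 0 := by rw [habbd', mul_zero, smul_zero]
    have hbaad : b * (a * (a * ad)) = 0 := by
      calc b * (a * (a * ad)) = b * (a * (ad * a)) := by rw [hca.eq]
      _ = b * ((a * ad) * a) := by rw [← mul_assoc a ad a]
      _ = (b * (a * ad)) * a := by rw [← mul_assoc]
      _ = 0 := by rw [hu0, zero_mul]
    have hred : (a + b) - (a + b) ^ 2 * (ad + bd) = (a - a ^ 2 * ad) + (b - b ^ 2 * bd) := by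
      have hexp : (a + b) ^ 2 * (ad + bd) = a * (a * ad) + b * (b * bd) := by
        rw [pow_two]
        simp only [mul_add, add_mul, mul_assoc, habd, hbad, habbd', hu0, mul_zero, add_zero,
          zero_add]
      rw [hexp, pow_two, pow_two, mul_assoc a a ad, mul_assoc b b bd]
      abel
    rw [hred]
    have hL : (a - a ^ 2 * ad) * (b - b ^ 2 * bd) = a * b := by
      simp only [mul_sub, sub_mul, pow_two, mul_assoc, hadb, zc1, habb, mul_zero, zero_mul,
        sub_zero]
    have hR : (b - b ^ 2 * bd) * (a - a ^ 2 * ad) = b * a := by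
      simp only [mul_sub, sub_mul, pow_two, mul_assoc, hbda, zc2, hbaad, mul_zero, zero_mul,
        sub_zero]
    have hcm : (a - a ^ 2 * ad) * (b - b ^ 2 * bd) =
        lam • ((b - b ^ 2 * bd) * (a - a ^ 2 * ad)) := by
      rw [hL, hR]; exact hab2
    rcases le_or_gt ‖lam‖ 1 with h1 | h1
    · exact qn_add_of_semicomm h1 hcm haq hbq
    · have hcm' : (b - b ^ 2 * bd) * (a - a ^ 2 * ad) =
          lam⁻¹ • ((a - a ^ 2 * ad) * (b - b ^ 2 * bd)) := by
        rw [hcm, inv_smul_smul₀ hlam]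
      have h2 : ‖lam⁻¹‖ ≤ 1 := by
        rw [norm_inv]
        exact inv_le_one_of_one_le₀ h1.le
      have h3 := qn_add_of_semicomm h2 hcm' hbq haq
      rwa [add_comm] at h3
end
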